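/- arXiv:1806.10745 — 5 statements merged into one kernel-verified Lean document; each statement's English description precedes it below -/
import Mathlib

section
/- Let K ≥ 1, C > 0, μ ∈ (0, 1/K], ℓ ∈ [0,1]^K, and let p be a Borel probability measure supported on {s ∈ ℝ^K : 0 ≤ s(a) ≤ C for all a, and s ≠ 0}. Define P(a) = E_{s∼p}[s(a)/Σ_{a'=1}^K s(a')] and P^μ(a) = (1 − Kμ)·P(a) + μ. Then Σ_{a=1}^K E_{s∼p}[ℓ(a)²·s(a)²] / P^μ(a) ≤ C²·K²; equivalently, if a* ∼ P^μ and ℓ̂(a) := ℓ(a*)·1{a = a*}/P^μ(a*), then E_{a*∼P^μ} E_{s∼p} ⟨s, ℓ̂⟩² ≤ C²·K². (Taking C = 1 covers measures supported on ramp-loss values φ^γ(f(x)), giving the bound K²; taking C = 1 + B/γ covers measures supported on hinge-loss values ψ^γ(f(x)) of a class with sup_{f,x} ‖f(x)‖_∞ ≤ B, giving the bound (1 + B/γ)²·K².) -/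
noncomputable section

open Finset MeasureTheory

lemma ratio_tangent (K : ℕ) (μ t : ℝ) (hK0 : (0:ℝ) < K) (hμ0 : 0 < μ)
    (hKμ : (K : ℝ) * μ ≤ 1) (ht : 0 ≤ t) :
    t / ((1 - K * μ) * t + μ) ≤ 1 + μ * K ^ 2 * (t - 1 / K) := by
  have he : (0:ℝ) ≤ 1 - K * μ := by linarith
  have hd : 0 < (1 - K * μ) * t + μ := by nlinarith
  rw [div_le_iff₀ hd]
  have hrw : μ * (K:ℝ) ^ 2 * (t - 1 / K) = μ * K ^ 2 * t - μ * K := by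
    field_simp
  rw [hrw]
  nlinarith [mul_nonneg (mul_nonneg hμ0.le he) (sq_nonneg (1 - (K:ℝ) * t))]

/-- variance control, Lemma 2 cases `S = φ^γ∘F` and `S = ψ^γ∘F`:
for a probability measure `p` supported on nonzero, coordinatewise `[0,C]`-valued vectors,
with induced action distribution `P(a) = E_{s∼p}[s(a)/Σ_{a'} s(a')]` and its `μ`-smoothing
`P^μ`, one has `Σ_a E_{s∼p}[ℓ(a)²·s(a)²] / P^μ(a) ≤ C²·K²`. -/
theorem stmt2 (K : ℕ) (hK : 1 ≤ K) (C : ℝ) (hC : 0 < C)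
    (μ : ℝ) (hμ0 : 0 < μ) (hμ : μ ≤ 1 / K)
    (ℓ : Fin K → ℝ) (hℓ : ∀ a, 0 ≤ ℓ a ∧ ℓ a ≤ 1)
    (p : Measure (Fin K → ℝ)) (hp : IsProbabilityMeasure p)
    (hsupp : p {s | (∀ a, 0 ≤ s a ∧ s a ≤ C) ∧ s ≠ 0}ᶜ = 0)
    (P Pμ : Fin K → ℝ)
    (hP : ∀ a, P a = ∫ s, s a / (∑ a', s a') ∂p)
    (hPμ : ∀ a, Pμ a = (1 - K * μ) * P a + μ) :
    ∑ a, (∫ s, (ℓ a) ^ 2 * (s a) ^ 2 ∂p) / Pμ a ≤ C ^ 2 * K ^ 2 := by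
  have hK0 : (0:ℝ) < K := by exact_mod_cast hK
  have hKμ : (K : ℝ) * μ ≤ 1 := by
    rw [le_div_iff₀ hK0] at hμ; linarith
  have hae : ∀ᵐ s ∂p, (∀ a, 0 ≤ s a ∧ s a ≤ C) ∧ s ≠ 0 := by
    rw [ae_iff]
    simpa [Set.compl_setOf] using hsupp
  -- positive sum on the support
  have hsum : ∀ s : Fin K → ℝ, ((∀ a, 0 ≤ s a ∧ s a ≤ C) ∧ s ≠ 0) → 0 < ∑ a', s a' := by
    intro s hs
    obtain ⟨a, ha⟩ := Function.ne_iff.mp hs.2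
    exact Finset.sum_pos' (fun i _ => (hs.1 i).1)
      ⟨a, Finset.mem_univ a, lt_of_le_of_ne (hs.1 a).1 (Ne.symm ha)⟩
  have hsumle : ∀ s : Fin K → ℝ, (∀ a, 0 ≤ s a ∧ s a ≤ C) → ∑ a', s a' ≤ K * C := by
    intro s hs
    calc ∑ a', s a' ≤ ∑ _a' : Fin K, C := Finset.sum_le_sum (fun i _ => (hs i).2)
      _ = K * C := by simp [mul_comm]
  -- measurability
  have hgm : ∀ a : Fin K, Measurable fun s : Fin K → ℝ => s a / ∑ a', s a' := fun a =>
    (measurable_pi_apply a).div (Finset.measurable_sum Finset.univ fun i _ => measurable_pi_apply i)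
  have hfm : ∀ a : Fin K, Measurable fun s : Fin K → ℝ => (ℓ a) ^ 2 * (s a) ^ 2 := fun a =>
    (measurable_const.mul ((measurable_pi_apply a).pow measurable_const))
  -- integrability
  have hgint : ∀ a : Fin K, Integrable (fun s : Fin K → ℝ => s a / ∑ a', s a') p := by
    intro a
    refine (integrable_const (1:ℝ)).mono' (hgm a).aestronglyMeasurable ?_
    filter_upwards [hae] with s hs
    have h0 := hsum s hs
    have h1 : s a ≤ ∑ a', s a' :=
      Finset.single_le_sum (fun i _ => (hs.1 i).1) (Finset.mem_univ a)
    rw [Real.norm_eq_abs, abs_of_nonneg (div_nonneg (hs.1 a).1 h0.le)]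
    exact (div_le_one h0).mpr h1
  have hfint : ∀ a : Fin K, Integrable (fun s : Fin K → ℝ => (ℓ a) ^ 2 * (s a) ^ 2) p := by
    intro a
    refine (integrable_const (C ^ 2)).mono' (hfm a).aestronglyMeasurable ?_
    filter_upwards [hae] with s hs
    rw [Real.norm_eq_abs, abs_of_nonneg (by positivity)]
    have h1 := (hℓ a).1; have h2 := (hℓ a).2
    have h3 := (hs.1 a).1; have h4 := (hs.1 a).2
    have h5 : ℓ a * s a ≤ 1 * C := mul_le_mul h2 h4 h3 zero_le_one
    nlinarith [mul_nonneg h1 h3]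
  -- P is nonneg
  have hPnn : ∀ a, 0 ≤ P a := by
    intro a
    rw [hP a]
    apply integral_nonneg_of_ae
    filter_upwards [hae] with s hs
    exact div_nonneg (hs.1 a).1 (hsum s hs).le
  -- Pμ is positive
  have hPμpos : ∀ a, 0 < Pμ a := by
    intro a
    rw [hPμ a]
    nlinarith [hPnn a]
  -- sum of P is 1
  have hPsum : ∑ a, P a = 1 := by
    simp_rw [hP]
    rw [← integral_finset_sum _ fun a _ => hgint a]
    have h1 : (1:ℝ) = ∫ _s, (1:ℝ) ∂p := by simp
    rw [h1]
    apply integral_congr_ae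
    filter_upwards [hae] with s hs
    rw [← Finset.sum_div, div_self (hsum s hs).ne']
  -- key integral bound
  have hkey : ∀ a : Fin K, (∫ s, (ℓ a) ^ 2 * (s a) ^ 2 ∂p) ≤ K * C ^ 2 * P a := by
    intro a
    rw [hP a, ← integral_const_mul]
    apply integral_mono_ae (hfint a) ((hgint a).const_mul _)
    filter_upwards [hae] with s hs
    have h0 := hsum s hs
    have h1 : s a ≤ ∑ a', s a' :=
      Finset.single_le_sum (fun i _ => (hs.1 i).1) (Finset.mem_univ a)
    have h2 := hsumle s hs.1
    have h3 := (hs.1 a).1; have h4 := (hs.1 a).2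
    have hl1 := (hℓ a).1; have hl2 := (hℓ a).2
    show (ℓ a) ^ 2 * (s a) ^ 2 ≤ (K : ℝ) * C ^ 2 * (s a / ∑ a', s a')
    rw [← mul_div_assoc, le_div_iff₀ h0]
    have e3 : ℓ a ^ 2 ≤ 1 := by nlinarith
    have e1 : s a ^ 2 * (∑ a', s a') ≤ s a ^ 2 * ((K:ℝ) * C) :=
      mul_le_mul_of_nonneg_left h2 (sq_nonneg _)
    have e2 : s a ^ 2 ≤ C * s a := by nlinarith
    calc ℓ a ^ 2 * s a ^ 2 * (∑ a', s a')
        ≤ s a ^ 2 * (∑ a', s a') := by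
          nlinarith [e3, mul_nonneg (sq_nonneg (s a)) h0.le]
      _ ≤ s a ^ 2 * ((K:ℝ) * C) := e1
      _ ≤ (C * s a) * ((K:ℝ) * C) := by
          apply mul_le_mul_of_nonneg_right e2 (by positivity)
      _ = (K:ℝ) * C ^ 2 * s a := by ring
  -- put together
  have step1 : ∑ a, (∫ s, (ℓ a) ^ 2 * (s a) ^ 2 ∂p) / Pμ a
      ≤ ∑ a, (K * C ^ 2) * (P a / Pμ a) := by
    apply Finset.sum_le_sum
    intro a _
    rw [← mul_div_assoc]
    exact (div_le_div_iff_of_pos_right (hPμpos a)).mpr (hkey a)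
  have step2 : ∑ a, ((K:ℝ) * C ^ 2) * (P a / Pμ a)
      ≤ ∑ a, ((K:ℝ) * C ^ 2) * (1 + μ * (K:ℝ) ^ 2 * (P a - 1 / K)) := by
    apply Finset.sum_le_sum
    intro a _
    apply mul_le_mul_of_nonneg_left _ (by positivity)
    rw [hPμ a]
    exact ratio_tangent K μ (P a) hK0 hμ0 hKμ (hPnn a)
  have hsum1 : ∑ a : Fin K, (1 + μ * (K:ℝ) ^ 2 * (P a - 1 / K)) = (K:ℝ) := by
    rw [Finset.sum_add_distrib, Finset.sum_const, Finset.card_univ, Fintype.card_fin,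
      ← Finset.mul_sum, Finset.sum_sub_distrib, hPsum, Finset.sum_const, Finset.card_univ,
      Fintype.card_fin]
    simp only [nsmul_eq_mul]
    field_simp
    ring
  have step3 : ∑ a, ((K:ℝ) * C ^ 2) * (1 + μ * (K:ℝ) ^ 2 * (P a - 1 / K)) = C ^ 2 * K ^ 2 := by
    rw [← Finset.mul_sum, hsum1]; ring
  calc ∑ a, (∫ s, (ℓ a) ^ 2 * (s a) ^ 2 ∂p) / Pμ a
      ≤ ∑ a, ((K:ℝ) * C ^ 2) * (P a / Pμ a) := step1
    _ ≤ ∑ a, ((K:ℝ) * C ^ 2) * (1 + μ * (K:ℝ) ^ 2 * (P a - 1 / K)) := step2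
    _ = C ^ 2 * K ^ 2 := step3
end
end

section
/- There is a universal constant c such that the following hold for all K ≥ 2, T ≥ 1, γ > 0. (a) For every finite class F of functions X → ℝ^K_{=0} with |F| ≥ 2 and sup_{f,x}‖f(x)‖_∞ ≤ 1, there exists a randomized contextual bandit strategy with, for every sequence (x_t, ℓ_t) ∈ X × [0,1]^K: E[Σ_{t=1}^T ℓ_t(a_t)] ≤ min_{f∈F} L_T^γ(f) + c·K·√(T·log|F|). (b) For every finite policy class Π of functions X → {1,…,K} with |Π| ≥ 2, there exists a randomized contextual bandit strategy with, for every sequence (x_t, ℓ_t) ∈ X × [0,1]^K: E[Σ_{t=1}^T ℓ_t(a_t)] ≤ min_{π∈Π} Σ_{t=1}^T ℓ_t(π(x_t)) + c·√(K·T·log|Π|). -/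
noncomputable section

open Finset MeasureTheory

/-- The observed history before round `t`. -/
def histOf {X : Type*} {K T : ℕ} (x : Fin T → X) (ℓ : Fin T → Fin K → ℝ)
    (a : Fin T → Fin K) (t : Fin T) : List (X × Fin K × ℝ) :=
  List.ofFn fun i : Fin t.1 =>
    (x ⟨i.1, i.2.trans t.2⟩, a ⟨i.1, i.2.trans t.2⟩,
      ℓ ⟨i.1, i.2.trans t.2⟩ (a ⟨i.1, i.2.trans t.2⟩))

/-- A randomized contextual bandit strategy. -/
def ValidStrat {X : Type*} (K : ℕ) (strat : List (X × Fin K × ℝ) → X → Fin K → ℝ) : Prop :=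
  ∀ h x, (∀ b, 0 ≤ strat h x b) ∧ ∑ b, strat h x b = 1

/-- Expected cumulative loss `E[Σ_t ℓ_t(a_t)]` of a strategy on a fixed sequence. -/
def expLoss {X : Type*} {K T : ℕ} (strat : List (X × Fin K × ℝ) → X → Fin K → ℝ)
    (x : Fin T → X) (ℓ : Fin T → Fin K → ℝ) : ℝ :=
  ∑ a : Fin T → Fin K, (∏ t, strat (histOf x ℓ a t) (x t) (a t)) * ∑ t, ℓ t (a t)

/-- The `γ`-margin cumulative loss `L_T^γ(f)`. -/
def marginLoss {X : Type*} {K T : ℕ} (γ : ℝ) (x : Fin T → X) (ℓ : Fin T → Fin K → ℝ)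
    (f : X → Fin K → ℝ) : ℝ :=
  ∑ t, ∑ b, if -γ ≤ f (x t) b then ℓ t b else 0

namespace Stmt8

lemma exp_neg_le_quad {z : ℝ} (hz : 0 ≤ z) : Real.exp (-z) ≤ 1 - z + z ^ 2 := by
  have h1 : z / 2 + 1 ≤ Real.exp (z / 2) := Real.add_one_le_exp _
  have h2 : Real.exp z = Real.exp (z / 2) * Real.exp (z / 2) := by
    rw [← Real.exp_add]; ring_nf
  have h4 : (0:ℝ) < 1 + z + z ^ 2 / 4 := by nlinarith
  have h5 : 1 + z + z ^ 2 / 4 ≤ Real.exp z := by nlinarith [Real.exp_pos (z/2)]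
  have h6 : Real.exp (-z) = (Real.exp z)⁻¹ := Real.exp_neg z
  have h7 : (0:ℝ) ≤ 1 - z + z ^ 2 := by nlinarith [sq_nonneg (z - 1)]
  rw [h6, ← one_div, div_le_iff₀ (Real.exp_pos z)]
  nlinarith [mul_le_mul_of_nonneg_left h5 h7, pow_nonneg hz 3, pow_nonneg hz 4]

section Alg

variable {X ι : Type} {K T : ℕ}

/-- exponential weight -/
def wt (η : ℝ) (L : ι → ℝ) (f : ι) : ℝ := Real.exp (-(η * L f))

def Zf (η : ℝ) (F : Finset ι) (L : ι → ℝ) : ℝ := ∑ f ∈ F, wt η L f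

def prb (η : ℝ) (F : Finset ι) (pol : ι → X → Fin K) (L : ι → ℝ) (x : X) (b : Fin K) : ℝ :=
  (∑ f ∈ F.filter fun f => pol f x = b, wt η L f) / Zf η F L

def updL (η : ℝ) (F : Finset ι) (pol : ι → X → Fin K) (L : ι → ℝ) (e : X × Fin K × ℝ) : ι → ℝ :=
  fun f => L f + (if pol f e.1 = e.2.1 then e.2.2 / prb η F pol L e.1 e.2.1 else 0)

def estL (η : ℝ) (F : Finset ι) (pol : ι → X → Fin K) (h : List (X × Fin K × ℝ)) : ι → ℝ :=
  h.foldl (updL η F pol) (fun _ => 0)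

def stratOf (η : ℝ) (F : Finset ι) (pol : ι → X → Fin K) :
    List (X × Fin K × ℝ) → X → Fin K → ℝ :=
  fun h x b => prb η F pol (estL η F pol h) x b

lemma wt_pos (η : ℝ) (L : ι → ℝ) (f : ι) : 0 < wt η L f := Real.exp_pos _

lemma Zf_pos (η : ℝ) {F : Finset ι} (hF : F.Nonempty) (L : ι → ℝ) : 0 < Zf η F L :=
  Finset.sum_pos (fun f _ => wt_pos η L f) hF

lemma prb_nonneg (η : ℝ) {F : Finset ι} (pol : ι → X → Fin K) (L : ι → ℝ) (x : X) (b : Fin K) :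
    0 ≤ prb η F pol L x b :=
  div_nonneg (Finset.sum_nonneg fun f _ => (wt_pos η L f).le)
    (Finset.sum_nonneg fun f _ => (wt_pos η L f).le)

lemma sum_prb (η : ℝ) {F : Finset ι} (hF : F.Nonempty) (pol : ι → X → Fin K) (L : ι → ℝ)
    (x : X) : ∑ b, prb η F pol L x b = 1 := by
  unfold prb
  rw [← Finset.sum_div]
  rw [Finset.sum_fiberwise_eq_sum_filter F univ (fun f => pol f x) (wt η L)]
  simp only [Finset.mem_univ, Finset.filter_true]
  exact div_self (Zf_pos η hF L).ne'

lemma valid_stratOf (η : ℝ) {F : Finset ι} (hF : F.Nonempty) (pol : ι → X → Fin K) :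
    ValidStrat K (stratOf η F pol) := by
  intro h x
  exact ⟨fun b => prb_nonneg η pol _ x b, sum_prb η hF pol _ x⟩

end Alg

section Tower

variable {K T : ℕ}

/-- product of probabilities over rounds `< m` -/
def Qp (p : Fin T → (Fin T → Fin K) → ℝ) (m : ℕ) (a : Fin T → Fin K) : ℝ :=
  ∏ t ∈ univ.filter fun t : Fin T => t.1 < m, p t a

def Cnd (p : Fin T → (Fin T → Fin K) → ℝ) (t : Fin T) (G : (Fin T → Fin K) → ℝ)
    (a : Fin T → Fin K) : ℝ :=
  ∑ b, p t (Function.update a t b) * G (Function.update a t b)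

def Ex (p : Fin T → (Fin T → Fin K) → ℝ) (m : ℕ) (G : (Fin T → Fin K) → ℝ) : ℝ :=
  (∑ a, Qp p m a * G a) / (K : ℝ) ^ (T - m)

lemma sum_update (t : Fin T) (g : (Fin T → Fin K) → ℝ) :
    ∑ a : Fin T → Fin K, ∑ b, g (Function.update a t b) = (K : ℝ) * ∑ a, g a := by
  classical
  set e := Equiv.funSplitAt t (Fin K) with he
  have key : ∀ (pr : Fin K × ({ j // j ≠ t } → Fin K)) (b : Fin K),
      Function.update (e.symm pr) t b = e.symm (b, pr.2) := by
    intro pr b; funext j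
    by_cases hj : j = t
    · subst hj; simp [e, Equiv.funSplitAt_symm_apply]
    · simp [e, Function.update_of_ne hj, Equiv.funSplitAt_symm_apply, hj]
  have inner : ∀ r : { j // j ≠ t } → Fin K → Fin K, True := fun _ => trivial
  calc ∑ a : Fin T → Fin K, ∑ b, g (Function.update a t b)
      = ∑ pr : Fin K × ({ j // j ≠ t } → Fin K), ∑ b, g (Function.update (e.symm pr) t b) :=
        (Equiv.sum_comp e.symm _).symm
    _ = ∑ pr : Fin K × ({ j // j ≠ t } → Fin K), ∑ b, g (e.symm (b, pr.2)) := by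
        refine Finset.sum_congr rfl fun pr _ => Finset.sum_congr rfl fun b _ => by rw [key]
    _ = ∑ c : Fin K, ∑ r : { j // j ≠ t } → Fin K, ∑ b, g (e.symm (b, r)) :=
        Fintype.sum_prod_type _
    _ = ∑ _c : Fin K, ∑ a, g a := by
        refine Finset.sum_congr rfl fun c _ => ?_
        rw [Finset.sum_comm]
        exact (Fintype.sum_prod_type fun pr => g (e.symm pr)).symm.trans (Equiv.sum_comp e.symm g)
    _ = (K : ℝ) * ∑ a, g a := by
        rw [Finset.sum_const, card_univ, Fintype.card_fin, nsmul_eq_mul]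

end Tower

end Stmt8

section Tower2
namespace Stmt8

variable {K T : ℕ} {p : Fin T → (Fin T → Fin K) → ℝ}

lemma Qp_nonneg (hp0 : ∀ t a, 0 ≤ p t a) (m : ℕ) (a : Fin T → Fin K) : 0 ≤ Qp p m a :=
  Finset.prod_nonneg fun t _ => hp0 t a

lemma Qp_succ {m : ℕ} (hm : m < T) (a : Fin T → Fin K) :
    Qp p (m + 1) a = Qp p m a * p ⟨m, hm⟩ a := by
  unfold Qp
  have hset : (Finset.univ.filter fun t : Fin T => t.1 < m + 1)
      = insert ⟨m, hm⟩ (Finset.univ.filter fun t : Fin T => t.1 < m) := by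
    ext s
    simp only [Finset.mem_filter, Finset.mem_univ, true_and, Finset.mem_insert, Fin.ext_iff]
    omega
  rw [hset, Finset.prod_insert (by simp), mul_comm]

lemma Qp_update (hp1 : ∀ (t : Fin T) a a', (∀ s : Fin T, s.1 ≤ t.1 → a s = a' s) → p t a = p t a')
    {m : ℕ} {t : Fin T} (hmt : m ≤ t.1) (a : Fin T → Fin K) (b : Fin K) :
    Qp p m (Function.update a t b) = Qp p m a := by
  refine Finset.prod_congr rfl fun s hs => ?_
  simp only [Finset.mem_filter, Finset.mem_univ, true_and] at hs
  refine hp1 s _ _ fun s' hs' => ?_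
  refine Function.update_of_ne ?_ _ _
  intro hcon
  have : s'.1 = t.1 := by rw [hcon]
  omega

lemma Ex_step (hp1 : ∀ (t : Fin T) a a', (∀ s : Fin T, s.1 ≤ t.1 → a s = a' s) → p t a = p t a')
    (hK : 0 < K) {m : ℕ} (hm : m < T) (G : (Fin T → Fin K) → ℝ) :
    Ex p (m + 1) G = Ex p m (Cnd p ⟨m, hm⟩ G) := by
  set t : Fin T := ⟨m, hm⟩ with ht
  have h1 : ∑ a, Qp p m a * Cnd p t G a = (K : ℝ) * ∑ a, Qp p (m + 1) a * G a := by
    have step2 := sum_update t (fun a' => Qp p m a' * (p t a' * G a'))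
    have step1 : ∑ a, Qp p m a * Cnd p t G a
        = ∑ a, ∑ b, Qp p m (Function.update a t b) *
            (p t (Function.update a t b) * G (Function.update a t b)) := by
      refine Finset.sum_congr rfl fun a _ => ?_
      unfold Cnd
      rw [Finset.mul_sum]
      refine Finset.sum_congr rfl fun b _ => ?_
      rw [Qp_update hp1 (show m ≤ t.1 from le_rfl) a b]
    rw [step1, step2]
    congr 1
    refine Finset.sum_congr rfl fun a _ => ?_
    rw [Qp_succ hm, ← ht]
    ring
  unfold Ex
  rw [h1]
  have hKne : ((K : ℝ)) ≠ 0 := Nat.cast_ne_zero.mpr hK.ne'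
  have hTm : T - m = (T - (m + 1)) + 1 := by omega
  rw [hTm, pow_succ]
  field_simp

lemma Ex_one (hp1 : ∀ (t : Fin T) a a', (∀ s : Fin T, s.1 ≤ t.1 → a s = a' s) → p t a = p t a')
    (hps : ∀ (t : Fin T) a, ∑ b, p t (Function.update a t b) = 1)
    (hK : 0 < K) : ∀ m, m ≤ T → Ex p m (fun _ => 1) = 1 := by
  intro m
  induction m with
  | zero =>
    intro _
    unfold Ex Qp
    have h0 : (Finset.univ.filter fun t : Fin T => t.1 < 0) = ∅ := by
      ext s; simp
    simp only [h0, Finset.prod_empty, one_mul, Finset.sum_const, card_univ, Nat.sub_zero]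
    rw [Fintype.card_fun, Fintype.card_fin, Fintype.card_fin, nsmul_eq_mul, mul_one]
    push_cast
    exact div_self (by positivity)
  | succ m ih =>
    intro hm
    have hmT : m < T := hm
    rw [Ex_step hp1 hK hmT]
    have hc : Cnd p ⟨m, hmT⟩ (fun _ => 1) = fun _ => 1 := by
      funext a
      unfold Cnd
      simp only [mul_one]
      exact hps _ a
    rw [hc]
    exact ih (le_of_lt hmT)

lemma Ex_mono (hp0 : ∀ t a, 0 ≤ p t a) (hK : 0 < K) {m : ℕ} {G H : (Fin T → Fin K) → ℝ}
    (h : ∀ a, G a ≤ H a) : Ex p m G ≤ Ex p m H := by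
  unfold Ex
  have hsum : (∑ a, Qp p m a * G a) ≤ ∑ a, Qp p m a * H a :=
    Finset.sum_le_sum fun a _ => mul_le_mul_of_nonneg_left (h a) (Qp_nonneg hp0 m a)
  have hpow : (0:ℝ) < (K : ℝ) ^ (T - m) := by positivity
  exact div_le_div_of_nonneg_right hsum hpow.le

lemma Ex_const_mul (m : ℕ) (c : ℝ) (G : (Fin T → Fin K) → ℝ) :
    Ex p m (fun a => c * G a) = c * Ex p m G := by
  unfold Ex
  have h : ∀ a, Qp p m a * (c * G a) = c * (Qp p m a * G a) := fun a => by ring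
  simp_rw [h, ← Finset.mul_sum, mul_div_assoc]

end Stmt8
end Tower2
section Tower3
namespace Stmt8

variable {K T : ℕ} {p : Fin T → (Fin T → Fin K) → ℝ}

lemma Ex_indep (hp1 : ∀ (t : Fin T) a a', (∀ s : Fin T, s.1 ≤ t.1 → a s = a' s) → p t a = p t a')
    (hps : ∀ (t : Fin T) a, ∑ b, p t (Function.update a t b) = 1) (hK : 0 < K)
    {m : ℕ} (hm : m < T) {G : (Fin T → Fin K) → ℝ}
    (hG : ∀ a b, G (Function.update a ⟨m, hm⟩ b) = G a) :
    Ex p (m + 1) G = Ex p m G := by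
  rw [Ex_step hp1 hK hm]
  congr 1
  funext a
  unfold Cnd
  calc ∑ b, p ⟨m, hm⟩ (Function.update a ⟨m, hm⟩ b) * G (Function.update a ⟨m, hm⟩ b)
      = ∑ b, p ⟨m, hm⟩ (Function.update a ⟨m, hm⟩ b) * G a := by
        refine Finset.sum_congr rfl fun b _ => by rw [hG]
    _ = (∑ b, p ⟨m, hm⟩ (Function.update a ⟨m, hm⟩ b)) * G a := by rw [Finset.sum_mul]
    _ = G a := by rw [hps]; ring

lemma sum_P_eq_Ex (G : (Fin T → Fin K) → ℝ) :
    ∑ a, (∏ t, p t a) * G a = Ex p T G := by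
  unfold Ex
  rw [Nat.sub_self, pow_zero, div_one]
  refine Finset.sum_congr rfl fun a _ => ?_
  congr 1
  unfold Qp
  refine (Finset.prod_congr ?_ fun _ _ => rfl)
  ext s
  simp [s.2]

lemma exp_bound_main (hp0 : ∀ t a, 0 ≤ p t a)
    (hp1 : ∀ (t : Fin T) a a', (∀ s : Fin T, s.1 ≤ t.1 → a s = a' s) → p t a = p t a')
    (hps : ∀ (t : Fin T) a, ∑ b, p t (Function.update a t b) = 1) (hK : 0 < K)
    (t : Fin T) (G : (Fin T → Fin K) → ℝ)
    (hdep : ∀ (s : Fin T), t.1 < s.1 → ∀ a b, G (Function.update a s b) = G a)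
    (c : ℝ) (hc : ∀ a, Cnd p t G a ≤ c) :
    ∑ a, (∏ s, p s a) * G a ≤ c := by
  rw [sum_P_eq_Ex]
  have hdown : ∀ j, t.1 + 1 ≤ j → j ≤ T → Ex p j G = Ex p (t.1 + 1) G := by
    intro j
    induction j with
    | zero => omega
    | succ j ih =>
      intro h1 h2
      rcases Nat.lt_or_ge (t.1 + 1) (j + 1) with hlt | hge
      · have hjT : j < T := by omega
        have hjt : t.1 < j := by omega
        rw [Ex_indep hp1 hps hK hjT (fun a b => hdep ⟨j, hjT⟩ hjt a b)]
        exact ih (by omega) (by omega)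
      · have : t.1 + 1 = j + 1 := by omega
        rw [this]
  rw [hdown T (by omega) le_rfl]
  have hstep : Ex p (t.1 + 1) G = Ex p t.1 (Cnd p t G) := by
    have := Ex_step hp1 hK t.2 G
    simpa using this
  rw [hstep]
  calc Ex p t.1 (Cnd p t G) ≤ Ex p t.1 (fun _ => c) := Ex_mono hp0 hK hc
    _ = c * Ex p t.1 (fun _ => 1) := by
        have := Ex_const_mul (p := p) t.1 c (fun _ => 1)
        simpa using this
    _ = c := by rw [Ex_one hp1 hps hK t.1 (le_of_lt t.2), mul_one]

lemma sum_P_eq_one (hp1 : ∀ (t : Fin T) a a', (∀ s : Fin T, s.1 ≤ t.1 → a s = a' s) → p t a = p t a')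
    (hps : ∀ (t : Fin T) a, ∑ b, p t (Function.update a t b) = 1) (hK : 0 < K) :
    ∑ a, (∏ t, p t a) = 1 := by
  have := sum_P_eq_Ex (p := p) (fun _ => 1)
  simp only [mul_one] at this
  rw [this]
  exact Ex_one hp1 hps hK T le_rfl

end Stmt8
end Tower3
section Alg2
namespace Stmt8

variable {X ι : Type} {K T : ℕ}

/-- cumulative estimated loss after `n` rounds -/
def cumL (η : ℝ) (F : Finset ι) (pol : ι → X → Fin K) (x : Fin T → X)
    (ℓ : Fin T → Fin K → ℝ) (a : Fin T → Fin K) : ℕ → ι → ℝ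
  | 0 => fun _ => 0
  | n + 1 =>
    if h : n < T then
      updL η F pol (cumL η F pol x ℓ a n) (x ⟨n, h⟩, a ⟨n, h⟩, ℓ ⟨n, h⟩ (a ⟨n, h⟩))
    else cumL η F pol x ℓ a n

variable (η : ℝ) (F : Finset ι) (pol : ι → X → Fin K) (x : Fin T → X)
  (ℓ : Fin T → Fin K → ℝ)

lemma estL_hist (a : Fin T → Fin K) :
    ∀ n (hn : n < T), estL η F pol (histOf x ℓ a ⟨n, hn⟩) = cumL η F pol x ℓ a n := by
  intro n
  induction n with
  | zero =>
    intro hn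
    show estL η F pol (List.ofFn _) = _
    rw [List.ofFn_zero]
    rfl
  | succ n ih =>
    intro hn
    have hn' : n < T := by omega
    have hstep : histOf x ℓ a ⟨n + 1, hn⟩ = (histOf x ℓ a ⟨n, hn'⟩)
        ++ [(x ⟨n, hn'⟩, a ⟨n, hn'⟩, ℓ ⟨n, hn'⟩ (a ⟨n, hn'⟩))] := by
      show List.ofFn _ = _
      rw [List.ofFn_succ', List.concat_eq_append]
      rfl
    rw [hstep]
    show List.foldl _ _ _ = _
    rw [List.foldl_concat]
    have : cumL η F pol x ℓ a (n + 1)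
        = updL η F pol (cumL η F pol x ℓ a n) (x ⟨n, hn'⟩, a ⟨n, hn'⟩, ℓ ⟨n, hn'⟩ (a ⟨n, hn'⟩)) := by
      show dite _ _ _ = _
      rw [dif_pos hn']
    rw [this, ← ih hn']
    rfl

lemma cumL_dep (a a' : Fin T → Fin K) :
    ∀ n, (∀ s : Fin T, s.1 < n → a s = a' s) →
      cumL η F pol x ℓ a n = cumL η F pol x ℓ a' n := by
  intro n
  induction n with
  | zero => intro _; rfl
  | succ n ih =>
    intro hagree
    show dite _ _ _ = dite _ _ _
    by_cases h : n < T
    · rw [dif_pos h, dif_pos h, ih (fun s hs => hagree s (by omega)),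
        hagree ⟨n, h⟩ (by simp)]
    · rw [dif_neg h, dif_neg h]
      exact ih fun s hs => hagree s (by omega)

/-- probability of chosen action at round `t` -/
def pfun (a : Fin T → Fin K) (t : Fin T) : ℝ :=
  prb η F pol (cumL η F pol x ℓ a t.1) (x t) (a t)

lemma pfun_nonneg (a : Fin T → Fin K) (t : Fin T) : 0 ≤ pfun η F pol x ℓ a t :=
  prb_nonneg η pol _ _ _

lemma pfun_dep (t : Fin T) (a a' : Fin T → Fin K)
    (hagree : ∀ s : Fin T, s.1 ≤ t.1 → a s = a' s) :
    pfun η F pol x ℓ a t = pfun η F pol x ℓ a' t := by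
  unfold pfun
  rw [cumL_dep η F pol x ℓ a a' t.1 (fun s hs => hagree s (le_of_lt hs)), hagree t le_rfl]

lemma pfun_update (t : Fin T) (a : Fin T → Fin K) (b : Fin K) :
    pfun η F pol x ℓ (Function.update a t b) t
      = prb η F pol (cumL η F pol x ℓ a t.1) (x t) b := by
  unfold pfun
  rw [cumL_dep η F pol x ℓ (Function.update a t b) a t.1
    (fun s hs => Function.update_of_ne (by intro hc; rw [hc] at hs; omega) _ _),
    Function.update_self]

lemma pfun_sum (hF : F.Nonempty) (t : Fin T) (a : Fin T → Fin K) :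
    ∑ b, pfun η F pol x ℓ (Function.update a t b) t = 1 := by
  have h : ∀ b, pfun η F pol x ℓ (Function.update a t b) t
      = prb η F pol (cumL η F pol x ℓ a t.1) (x t) b :=
    fun b => pfun_update η F pol x ℓ t a b
  rw [Finset.sum_congr rfl fun b _ => h b]
  exact sum_prb η hF pol _ _

lemma strat_eq_pfun (a : Fin T → Fin K) (t : Fin T) :
    stratOf η F pol (histOf x ℓ a t) (x t) (a t) = pfun η F pol x ℓ a t := by
  show prb η F pol (estL η F pol (histOf x ℓ a t)) (x t) (a t) = _
  rw [show (t : Fin T) = ⟨t.1, t.2⟩ from rfl, estL_hist η F pol x ℓ a t.1 t.2]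
  rfl

end Stmt8
end Alg2
section Alg3
namespace Stmt8

variable {X ι : Type} {K T : ℕ}
variable (η : ℝ) (F : Finset ι) (pol : ι → X → Fin K) (x : Fin T → X)
  (ℓ : Fin T → Fin K → ℝ)

lemma round_bound (hη : 0 < η) (hF : F.Nonempty)
    (hℓ : ∀ (t : Fin T) b, 0 ≤ ℓ t b ∧ ℓ t b ≤ 1) (a : Fin T → Fin K)
    (n : ℕ) (h : n < T)
    (hpt : 0 < pfun η F pol x ℓ a ⟨n, h⟩) :
    Real.log (Zf η F (cumL η F pol x ℓ a (n + 1)))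
      ≤ Real.log (Zf η F (cumL η F pol x ℓ a n))
        + (-(η * ℓ ⟨n, h⟩ (a ⟨n, h⟩)) + η ^ 2 * (1 / pfun η F pol x ℓ a ⟨n, h⟩)) := by
  set t : Fin T := ⟨n, h⟩ with ht
  set L := cumL η F pol x ℓ a n with hL
  set pt := pfun η F pol x ℓ a t with hptdef'
  have hptdef : pt = prb η F pol L (x t) (a t) := rfl
  set lt := ℓ t (a t) with hlt
  have hl0 : 0 ≤ lt := (hℓ t (a t)).1
  have hl1 : lt ≤ 1 := (hℓ t (a t)).2
  set d : ι → ℝ := fun f => if pol f (x t) = a t then lt / pt else 0 with hd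
  have hd0 : ∀ f, 0 ≤ d f := by
    intro f
    rw [hd]
    dsimp only
    split
    · exact div_nonneg hl0 hpt.le
    · exact le_rfl
  have hcum : cumL η F pol x ℓ a (n + 1) = fun f => L f + d f := by
    show dite _ _ _ = _
    rw [dif_pos h]
    rfl
  set W := Zf η F L with hW
  have hWpos : 0 < W := Zf_pos η hF L
  have hfib : ∑ f ∈ F.filter (fun f => pol f (x t) = a t), wt η L f = pt * W := by
    rw [hptdef]
    unfold prb
    rw [div_mul_cancel₀]
    exact hWpos.ne'
  have hwte : ∀ f, wt η (fun f' => L f' + d f') f = wt η L f * Real.exp (-(η * d f)) := by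
    intro f
    unfold wt
    rw [← Real.exp_add]
    ring_nf
  have hsum1 : ∑ f ∈ F, wt η L f * d f = lt * W := by
    have he : ∀ f ∈ F, wt η L f * d f
        = if pol f (x t) = a t then wt η L f * (lt / pt) else 0 := by
      intro f _
      rw [hd]
      dsimp only
      split <;> simp
    rw [Finset.sum_congr rfl he, ← Finset.sum_filter, ← Finset.sum_mul, hfib]
    field_simp
  have hsum2 : ∑ f ∈ F, wt η L f * d f ^ 2 ≤ W * (1 / pt) := by
    have he : ∀ f ∈ F, wt η L f * d f ^ 2
        = if pol f (x t) = a t then wt η L f * (lt / pt) ^ 2 else 0 := by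
      intro f _
      rw [hd]
      dsimp only
      split <;> simp
    rw [Finset.sum_congr rfl he, ← Finset.sum_filter, ← Finset.sum_mul, hfib]
    have : pt * W * (lt / pt) ^ 2 = lt ^ 2 * (W * (1 / pt)) := by
      field_simp
    rw [this]
    have h2 : lt ^ 2 ≤ 1 := by nlinarith
    nlinarith [mul_pos hWpos (by positivity : (0:ℝ) < 1 / pt)]
  have hW' : Zf η F (cumL η F pol x ℓ a (n + 1)) ≤ W * (1 - η * lt + η ^ 2 * (1 / pt)) := by
    rw [hcum]
    have step1 : Zf η F (fun f => L f + d f) = ∑ f ∈ F, wt η L f * Real.exp (-(η * d f)) :=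
      Finset.sum_congr rfl fun f _ => hwte f
    have step2 : ∑ f ∈ F, wt η L f * Real.exp (-(η * d f))
        ≤ ∑ f ∈ F, wt η L f * (1 - η * d f + (η * d f) ^ 2) :=
      Finset.sum_le_sum fun f _ => mul_le_mul_of_nonneg_left
        (exp_neg_le_quad (mul_nonneg hη.le (hd0 f))) (wt_pos η L f).le
    have step3 : ∑ f ∈ F, wt η L f * (1 - η * d f + (η * d f) ^ 2)
        = W - η * (∑ f ∈ F, wt η L f * d f) + η ^ 2 * (∑ f ∈ F, wt η L f * d f ^ 2) := by
      have expand : W - η * (∑ f ∈ F, wt η L f * d f) + η ^ 2 * (∑ f ∈ F, wt η L f * d f ^ 2)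
          = ∑ f ∈ F, (wt η L f - η * (wt η L f * d f) + η ^ 2 * (wt η L f * d f ^ 2)) := by
        rw [hW]
        unfold Zf
        rw [Finset.mul_sum, Finset.mul_sum, ← Finset.sum_sub_distrib, ← Finset.sum_add_distrib]
      rw [expand]
      exact Finset.sum_congr rfl fun f _ => by ring
    rw [step1]
    refine le_trans step2 ?_
    rw [step3, hsum1]
    nlinarith [sq_nonneg η]
  set r := 1 - η * lt + η ^ 2 * (1 / pt) with hr
  have hW'pos : 0 < Zf η F (cumL η F pol x ℓ a (n + 1)) := Zf_pos η hF _
  have hrpos : 0 < r := by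
    by_contra hc
    push_neg at hc
    have : W * r ≤ 0 := mul_nonpos_of_nonneg_of_nonpos hWpos.le hc
    linarith
  calc Real.log (Zf η F (cumL η F pol x ℓ a (n + 1)))
      ≤ Real.log (W * r) := Real.log_le_log hW'pos hW'
    _ = Real.log W + Real.log r := Real.log_mul hWpos.ne' hrpos.ne'
    _ ≤ Real.log W + (r - 1) := add_le_add_right (Real.log_le_sub_one_of_pos hrpos) _
    _ = Real.log W + (-(η * lt) + η ^ 2 * (1 / pt)) := by rw [hr]; ring

end Stmt8
end Alg3
section Alg4
namespace Stmt8

variable {X ι : Type} {K T : ℕ}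
variable (η : ℝ) (F : Finset ι) (pol : ι → X → Fin K) (x : Fin T → X)
  (ℓ : Fin T → Fin K → ℝ)

lemma cumL_eq_sum (a : Fin T → Fin K) (f : ι) :
    cumL η F pol x ℓ a T f = ∑ t : Fin T,
      (if pol f (x t) = a t then ℓ t (a t) / pfun η F pol x ℓ a t else 0) := by
  set g : ℕ → ℝ := fun i => if hi : i < T then
      (if pol f (x ⟨i, hi⟩) = a ⟨i, hi⟩ then
        ℓ ⟨i, hi⟩ (a ⟨i, hi⟩) / pfun η F pol x ℓ a ⟨i, hi⟩ else 0)
    else 0 with hg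
  have gen : ∀ n, cumL η F pol x ℓ a n f = ∑ i ∈ Finset.range n, g i := by
    intro n
    induction n with
    | zero => simp [cumL]
    | succ n ih =>
      rw [Finset.sum_range_succ, ← ih]
      have hstep : cumL η F pol x ℓ a (n + 1) = if hn : n < T then
          updL η F pol (cumL η F pol x ℓ a n) (x ⟨n, hn⟩, a ⟨n, hn⟩, ℓ ⟨n, hn⟩ (a ⟨n, hn⟩))
        else cumL η F pol x ℓ a n := rfl
      by_cases hn : n < T
      · rw [hstep, dif_pos hn, hg]
        simp only []
        rw [dif_pos hn]
        rfl
      · rw [hstep, dif_neg hn, hg]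
        simp only []
        rw [dif_neg hn, add_zero]
  rw [gen T, ← Fin.sum_univ_eq_sum_range g T]
  refine Finset.sum_congr rfl fun t _ => ?_
  rw [hg]
  simp only []
  rw [dif_pos t.2]

lemma pointwise_bound (hη : 0 < η) (hF : F.Nonempty)
    (hℓ : ∀ (t : Fin T) b, 0 ≤ ℓ t b ∧ ℓ t b ≤ 1) (a : Fin T → Fin K)
    (hsup : ∀ t : Fin T, 0 < pfun η F pol x ℓ a t) (f : ι) (hf : f ∈ F) :
    ∑ t, ℓ t (a t) ≤ cumL η F pol x ℓ a T f + Real.log F.card / η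
      + η * ∑ t : Fin T, 1 / pfun η F pol x ℓ a t := by
  set g : ℕ → ℝ := fun n => if h : n < T then
      -(η * ℓ ⟨n, h⟩ (a ⟨n, h⟩)) + η ^ 2 * (1 / pfun η F pol x ℓ a ⟨n, h⟩) else 0 with hg
  have tel : ∀ n, n ≤ T → Real.log (Zf η F (cumL η F pol x ℓ a n))
      ≤ Real.log (Zf η F (cumL η F pol x ℓ a 0)) + ∑ i ∈ Finset.range n, g i := by
    intro n
    induction n with
    | zero => intro _; simp
    | succ n ih =>
      intro hn1
      have hn : n < T := hn1
      have hround := round_bound η F pol x ℓ hη hF hℓ a n hn (hsup ⟨n, hn⟩)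
      have hgn : g n = -(η * ℓ ⟨n, hn⟩ (a ⟨n, hn⟩))
          + η ^ 2 * (1 / pfun η F pol x ℓ a ⟨n, hn⟩) := by
        rw [hg]; exact dif_pos hn
      rw [Finset.sum_range_succ, hgn]
      have hih := ih hn.le
      linarith
  have h0 : Real.log (Zf η F (cumL η F pol x ℓ a 0)) = Real.log (F.card : ℝ) := by
    congr 1
    unfold Zf wt
    simp [cumL]
  have hlow : -(η * cumL η F pol x ℓ a T f) ≤ Real.log (Zf η F (cumL η F pol x ℓ a T)) := by
    have hsingle : Real.exp (-(η * cumL η F pol x ℓ a T f)) ≤ Zf η F (cumL η F pol x ℓ a T) :=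
      Finset.single_le_sum (f := wt η (cumL η F pol x ℓ a T)) (fun i _ => (wt_pos η _ i).le) hf
    have hlog := Real.log_le_log (Real.exp_pos _) hsingle
    rwa [Real.log_exp] at hlog
  have hsumg : ∑ i ∈ Finset.range T, g i
      = ∑ t : Fin T, (-(η * ℓ t (a t)) + η ^ 2 * (1 / pfun η F pol x ℓ a t)) := by
    rw [← Fin.sum_univ_eq_sum_range g T]
    refine Finset.sum_congr rfl fun t _ => ?_
    rw [hg]
    exact dif_pos t.2
  have key := tel T le_rfl
  rw [h0, hsumg] at key
  have key2 : -(η * cumL η F pol x ℓ a T f) ≤ Real.log (F.card : ℝ)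
      + ∑ t : Fin T, (-(η * ℓ t (a t)) + η ^ 2 * (1 / pfun η F pol x ℓ a t)) :=
    le_trans hlow key
  have hsplit : ∑ t : Fin T, (-(η * ℓ t (a t)) + η ^ 2 * (1 / pfun η F pol x ℓ a t))
      = -(η * ∑ t, ℓ t (a t)) + η ^ 2 * ∑ t : Fin T, 1 / pfun η F pol x ℓ a t := by
    rw [Finset.sum_add_distrib, Finset.mul_sum, Finset.mul_sum]
    congr 1
    rw [← Finset.sum_neg_distrib]
  rw [hsplit] at key2
  have hgoal : η * (∑ t, ℓ t (a t)) ≤ η * (cumL η F pol x ℓ a T f + Real.log F.card / η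
      + η * ∑ t : Fin T, 1 / pfun η F pol x ℓ a t) := by
    have hexp : η * (cumL η F pol x ℓ a T f + Real.log F.card / η
        + η * ∑ t : Fin T, 1 / pfun η F pol x ℓ a t)
        = η * cumL η F pol x ℓ a T f + Real.log F.card
          + η ^ 2 * ∑ t : Fin T, 1 / pfun η F pol x ℓ a t := by
      field_simp
    rw [hexp]
    linarith
  exact le_of_mul_le_mul_left hgoal hη

end Stmt8
end Alg4
section Master
namespace Stmt8

lemma master {X ι : Type} {K T : ℕ} (hK : 2 ≤ K) (hT : 1 ≤ T) (F : Finset ι) (hF : 2 ≤ F.card)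
    (pol : ι → X → Fin K) :
    ∃ strat : List (X × Fin K × ℝ) → X → Fin K → ℝ, ValidStrat K strat ∧
      ∀ (x : Fin T → X) (ℓ : Fin T → Fin K → ℝ), (∀ t b, 0 ≤ ℓ t b ∧ ℓ t b ≤ 1) →
        ∀ f ∈ F, expLoss strat x ℓ ≤ (∑ t, ℓ t (pol f (x t)))
          + 2 * Real.sqrt ((K : ℝ) * T * Real.log F.card) := by
  have hFne : F.Nonempty := Finset.card_pos.mp (by omega)
  have hN1 : (1 : ℝ) < F.card := by exact_mod_cast hF
  have hlogN : 0 < Real.log F.card := Real.log_pos hN1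
  have hKT : (0 : ℝ) < (K : ℝ) * T := by
    have h1 : 0 < K := by omega
    have h2 : 0 < T := by omega
    positivity
  set η := Real.sqrt (Real.log F.card / ((K : ℝ) * T)) with hηdef
  have hη : 0 < η := Real.sqrt_pos.mpr (div_pos hlogN hKT)
  refine ⟨stratOf η F pol, valid_stratOf η hFne pol, ?_⟩
  intro x ℓ hℓ f hf
  set p : Fin T → (Fin T → Fin K) → ℝ := fun t a => pfun η F pol x ℓ a t with hpdef
  have hp0 : ∀ t a, 0 ≤ p t a := fun t a => pfun_nonneg η F pol x ℓ a t
  have hp1 : ∀ (t : Fin T) a a', (∀ s : Fin T, s.1 ≤ t.1 → a s = a' s) → p t a = p t a' :=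
    fun t a a' h => pfun_dep η F pol x ℓ t a a' h
  have hps : ∀ (t : Fin T) a, ∑ b, p t (Function.update a t b) = 1 :=
    fun t a => pfun_sum η F pol x ℓ hFne t a
  have hKpos : 0 < K := by omega
  have hexp : expLoss (stratOf η F pol) x ℓ = ∑ a, (∏ t, p t a) * ∑ t, ℓ t (a t) := by
    unfold expLoss
    refine Finset.sum_congr rfl fun a _ => ?_
    congr 1
    exact Finset.prod_congr rfl fun t _ => strat_eq_pfun η F pol x ℓ a t
  set C := Real.log F.card / η with hC
  have hcomp : ∑ a, (∏ t, p t a) * ∑ t, ℓ t (a t)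
      ≤ ∑ a, (∏ t, p t a) * (cumL η F pol x ℓ a T f + C
          + η * ∑ t : Fin T, 1 / p t a) := by
    refine Finset.sum_le_sum fun a _ => ?_
    by_cases hPa : (∏ t, p t a) = 0
    · rw [hPa, zero_mul, zero_mul]
    · have hsup : ∀ t : Fin T, 0 < p t a := by
        intro t
        have hne : p t a ≠ 0 := fun hz => hPa (Finset.prod_eq_zero (Finset.mem_univ t) hz)
        exact lt_of_le_of_ne (hp0 t a) (Ne.symm hne)
      have hpos : 0 ≤ ∏ t, p t a := Finset.prod_nonneg fun t _ => hp0 t a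
      exact mul_le_mul_of_nonneg_left
        (pointwise_bound η F pol x ℓ hη hFne hℓ a hsup f hf) hpos
  have hone : ∑ a, (∏ t, p t a) = 1 := sum_P_eq_one hp1 hps hKpos
  -- E1
  have hE1 : ∑ a, (∏ t, p t a) * cumL η F pol x ℓ a T f
      ≤ ∑ t : Fin T, ℓ t (pol f (x t)) := by
    have hswap : ∑ a, (∏ t, p t a) * cumL η F pol x ℓ a T f
        = ∑ t : Fin T, ∑ a, (∏ s, p s a)
            * (if pol f (x t) = a t then ℓ t (a t) / p t a else 0) := by
      rw [Finset.sum_comm]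
      refine Finset.sum_congr rfl fun a _ => ?_
      rw [cumL_eq_sum η F pol x ℓ a f, Finset.mul_sum]
    rw [hswap]
    refine Finset.sum_le_sum fun t _ => ?_
    refine exp_bound_main hp0 hp1 hps hKpos t _ ?_ _ ?_
    · intro s hs a b
      have hne : t ≠ s := by intro hc; rw [hc] at hs; omega
      have h1 : Function.update a s b t = a t := Function.update_of_ne hne _ _
      have h2 : p t (Function.update a s b) = p t a := by
        refine hp1 t _ _ fun s' hs' => Function.update_of_ne ?_ _ _
        intro hc
        rw [hc] at hs'
        omega
      rw [h1, h2]
    · intro a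
      unfold Cnd
      have hterm : ∀ b : Fin K, p t (Function.update a t b)
          * (if pol f (x t) = (Function.update a t b) t
              then ℓ t ((Function.update a t b) t) / p t (Function.update a t b) else 0)
          = if pol f (x t) = b
              then p t (Function.update a t b) * (ℓ t b / p t (Function.update a t b)) else 0 := by
        intro b
        rw [Function.update_self]
        split <;> simp
      rw [Finset.sum_congr rfl fun b _ => hterm b, Finset.sum_ite_eq]
      simp only [Finset.mem_univ, if_true]
      set q := p t (Function.update a t (pol f (x t))) with hq
      rcases eq_or_ne q 0 with hz | hz
      · rw [hz, zero_mul]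
        exact (hℓ t _).1
      · rw [mul_div_cancel₀ _ hz]
  -- E2
  have hE2 : ∑ a, (∏ t, p t a) * ∑ t : Fin T, 1 / p t a ≤ (K : ℝ) * T := by
    have hswap : ∑ a, (∏ t, p t a) * ∑ t : Fin T, 1 / p t a
        = ∑ t : Fin T, ∑ a, (∏ s, p s a) * (1 / p t a) := by
      rw [Finset.sum_comm]
      refine Finset.sum_congr rfl fun a _ => ?_
      rw [Finset.mul_sum]
    rw [hswap]
    calc ∑ t : Fin T, ∑ a, (∏ s, p s a) * (1 / p t a)
        ≤ ∑ _t : Fin T, (K : ℝ) := by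
          refine Finset.sum_le_sum fun t _ => ?_
          refine exp_bound_main hp0 hp1 hps hKpos t _ ?_ _ ?_
          · intro s hs a b
            have h2 : p t (Function.update a s b) = p t a := by
              refine hp1 t _ _ fun s' hs' => Function.update_of_ne ?_ _ _
              intro hc
              rw [hc] at hs'
              omega
            rw [h2]
          · intro a
            unfold Cnd
            calc ∑ b, p t (Function.update a t b) * (1 / p t (Function.update a t b))
                ≤ ∑ _b : Fin K, (1 : ℝ) := by
                  refine Finset.sum_le_sum fun b _ => ?_
                  rcases eq_or_ne (p t (Function.update a t b)) 0 with hz | hz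
                  · rw [hz, zero_mul]; norm_num
                  · rw [mul_one_div, div_self hz]
              _ = (K : ℝ) := by simp
      _ = (K : ℝ) * T := by simp [mul_comm]
  -- combine
  rw [hexp]
  have hsplit : ∑ a, (∏ t, p t a) * (cumL η F pol x ℓ a T f + C + η * ∑ t : Fin T, 1 / p t a)
      = (∑ a, (∏ t, p t a) * cumL η F pol x ℓ a T f) + C * (∑ a, (∏ t, p t a))
        + η * (∑ a, (∏ t, p t a) * ∑ t : Fin T, 1 / p t a) := by
    rw [Finset.mul_sum, Finset.mul_sum, ← Finset.sum_add_distrib, ← Finset.sum_add_distrib]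
    refine Finset.sum_congr rfl fun a _ => by ring
  have halg : C + η * ((K : ℝ) * T) = 2 * Real.sqrt ((K : ℝ) * T * Real.log F.card) := by
    have hsq : η * η = Real.log F.card / ((K : ℝ) * T) :=
      Real.mul_self_sqrt (div_pos hlogN hKT).le
    have hR : Real.sqrt ((K : ℝ) * T * Real.log F.card) * η = Real.log F.card := by
      rw [hηdef, ← Real.sqrt_mul (by positivity)]
      have harg : (K : ℝ) * T * Real.log F.card * (Real.log F.card / ((K : ℝ) * T))
          = (Real.log F.card) ^ 2 := by
        field_simp
      rw [harg, Real.sqrt_sq hlogN.le]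
    have hmul : (C + η * ((K : ℝ) * T)) * η
        = (2 * Real.sqrt ((K : ℝ) * T * Real.log F.card)) * η := by
      rw [hC, add_mul, div_mul_cancel₀ _ hη.ne']
      have h3 : η * ((K : ℝ) * T) * η = Real.log F.card := by
        have hcomm : η * ((K : ℝ) * T) * η = η * η * ((K : ℝ) * T) := by ring
        rw [hcomm, hsq]
        field_simp
      rw [h3]
      nlinarith [hR]
    exact mul_right_cancel₀ hη.ne' hmul
  calc ∑ a, (∏ t, p t a) * ∑ t, ℓ t (a t)
      ≤ ∑ a, (∏ t, p t a) * (cumL η F pol x ℓ a T f + C + η * ∑ t : Fin T, 1 / p t a) := hcomp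
    _ = (∑ a, (∏ t, p t a) * cumL η F pol x ℓ a T f) + C * (∑ a, (∏ t, p t a))
        + η * (∑ a, (∏ t, p t a) * ∑ t : Fin T, 1 / p t a) := hsplit
    _ ≤ (∑ t : Fin T, ℓ t (pol f (x t))) + C * 1 + η * ((K : ℝ) * T) := by
        refine add_le_add (add_le_add hE1 (by rw [hone])) ?_
        exact mul_le_mul_of_nonneg_left hE2 hη.le
    _ = (∑ t : Fin T, ℓ t (pol f (x t))) + (C + η * ((K : ℝ) * T)) := by ring
    _ = (∑ t : Fin T, ℓ t (pol f (x t)))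
        + 2 * Real.sqrt ((K : ℝ) * T * Real.log F.card) := by rw [halg]

end Stmt8
end Master

/-- Example 1: finite classes: (a) margin regret `O(K√(T log|F|))` for a
finite regressor class, and (b) the optimal policy regret `O(√(KT log|Π|))` for a finite
policy class, with a shared universal constant. -/
theorem stmt8 :
    ∃ c : ℝ, 0 < c ∧
      ((∀ (X : Type) (K T : ℕ) (γ : ℝ) (F : Finset (X → Fin K → ℝ)),
        2 ≤ K → 1 ≤ T → 0 < γ → 2 ≤ F.card →
        (∀ f ∈ F, ∀ x, ‖f x‖ ≤ 1) → (∀ f ∈ F, ∀ x, ∑ b, f x b = 0) →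
        ∃ strat : List (X × Fin K × ℝ) → X → Fin K → ℝ,
          ValidStrat K strat ∧
          ∀ (x : Fin T → X) (ℓ : Fin T → Fin K → ℝ),
            (∀ t b, 0 ≤ ℓ t b ∧ ℓ t b ≤ 1) →
            expLoss strat x ℓ ≤ sInf (marginLoss γ x ℓ '' ↑F)
              + c * K * Real.sqrt (T * Real.log F.card)) ∧
      (∀ (X : Type) (K T : ℕ) (Pol : Finset (X → Fin K)),
        2 ≤ K → 1 ≤ T → 2 ≤ Pol.card →
        ∃ strat : List (X × Fin K × ℝ) → X → Fin K → ℝ,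
          ValidStrat K strat ∧
          ∀ (x : Fin T → X) (ℓ : Fin T → Fin K → ℝ),
            (∀ t b, 0 ≤ ℓ t b ∧ ℓ t b ≤ 1) →
            expLoss strat x ℓ ≤ sInf ((fun pl : X → Fin K => ∑ t, ℓ t (pl (x t))) '' (Pol : Set (X → Fin K)))
              + c * Real.sqrt (K * T * Real.log Pol.card))) := by

  refine ⟨2, by norm_num, ?_, ?_⟩
  · -- part (a)
    intro X K T γ F hK hT hγ hF _hbound hzero
    have hKpos : 0 < K := by omega
    have hFne : F.Nonempty := Finset.card_pos.mp (by omega)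
    -- argmax policy
    have hmax : ∀ (f : X → Fin K → ℝ) (xx : X), ∃ b : Fin K, ∀ b' : Fin K, f xx b' ≤ f xx b := by
      intro f xx
      obtain ⟨b, _, hb⟩ :=
        Finset.exists_max_image Finset.univ (f xx) ⟨⟨0, hKpos⟩, Finset.mem_univ _⟩
      exact ⟨b, fun b' => hb b' (Finset.mem_univ _)⟩
    choose pol hpol using hmax
    obtain ⟨strat, hvalid, hreg⟩ := Stmt8.master hK hT F hF pol
    refine ⟨strat, hvalid, ?_⟩
    intro x ℓ hℓ
    set R := 2 * Real.sqrt ((K : ℝ) * T * Real.log F.card) with hR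
    have hptw : ∀ f ∈ F, expLoss strat x ℓ ≤ marginLoss γ x ℓ f + R := by
      intro f hf
      refine le_trans (hreg x ℓ hℓ f hf) ?_
      have hmm : (∑ t, ℓ t (pol f (x t))) ≤ marginLoss γ x ℓ f := by
        unfold marginLoss
        refine Finset.sum_le_sum fun t _ => ?_
        have hb : -γ ≤ f (x t) (pol f (x t)) := by
          have hex : ∃ b, 0 ≤ f (x t) b := by
            by_contra hc
            push_neg at hc
            have hsum := hzero f hf (x t)
            have hneg : ∑ b, f (x t) b < 0 :=
              Finset.sum_neg (fun b _ => hc b) ⟨⟨0, hKpos⟩, Finset.mem_univ _⟩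
            linarith
          obtain ⟨b, hb0⟩ := hex
          have := hpol f (x t) b
          linarith
        calc ℓ t (pol f (x t))
            = if -γ ≤ f (x t) (pol f (x t)) then ℓ t (pol f (x t)) else 0 := (if_pos hb).symm
          _ ≤ ∑ b, if -γ ≤ f (x t) b then ℓ t b else 0 := by
              refine Finset.single_le_sum (f := fun b => if -γ ≤ f (x t) b then ℓ t b else 0)
                (fun b _ => ?_) (Finset.mem_univ (pol f (x t)))
              by_cases hcase : -γ ≤ f (x t) b
              · rw [if_pos hcase]
                exact (hℓ t b).1
              · rw [if_neg hcase]
      linarith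
    have hSne : (marginLoss γ x ℓ '' ↑F).Nonempty := by
      obtain ⟨f0, hf0⟩ := hFne
      exact ⟨marginLoss γ x ℓ f0, f0, hf0, rfl⟩
    have hinf : expLoss strat x ℓ - R ≤ sInf (marginLoss γ x ℓ '' ↑F) := by
      refine le_csInf hSne ?_
      rintro y ⟨f, hfmem, rfl⟩
      have := hptw f hfmem
      linarith
    have hcmp : R ≤ 2 * K * Real.sqrt ((T : ℝ) * Real.log F.card) := by
      rw [hR]
      have h1 : (K : ℝ) * T * Real.log F.card = (K : ℝ) * ((T : ℝ) * Real.log F.card) := by ring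
      rw [h1, Real.sqrt_mul (by positivity)]
      have hK2 : (2 : ℝ) ≤ (K : ℝ) := by exact_mod_cast hK
      have h2 : Real.sqrt (K : ℝ) ≤ (K : ℝ) := by
        have h3 := Real.sqrt_le_sqrt (show (K : ℝ) ≤ (K : ℝ) ^ 2 by nlinarith)
        rwa [Real.sqrt_sq (by positivity)] at h3
      have h3 : (0:ℝ) ≤ Real.sqrt ((T : ℝ) * Real.log F.card) := Real.sqrt_nonneg _
      nlinarith [Real.sqrt_nonneg (K : ℝ)]
    have hfinal := le_trans (by linarith [hinf] : expLoss strat x ℓ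
        ≤ sInf (marginLoss γ x ℓ '' ↑F) + R) (by linarith [hcmp] :
        sInf (marginLoss γ x ℓ '' ↑F) + R
          ≤ sInf (marginLoss γ x ℓ '' ↑F) + 2 * K * Real.sqrt ((T : ℝ) * Real.log F.card))
    exact hfinal
  · -- part (b)
    intro X K T Pol hK hT hPol
    have hPne : Pol.Nonempty := Finset.card_pos.mp (by omega)
    obtain ⟨strat, hvalid, hreg⟩ := Stmt8.master hK hT Pol hPol (fun pl => pl)
    refine ⟨strat, hvalid, ?_⟩
    intro x ℓ hℓ
    set R := 2 * Real.sqrt ((K : ℝ) * T * Real.log Pol.card) with hR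
    have hSne : ((fun pl : X → Fin K => ∑ t, ℓ t (pl (x t))) '' (Pol : Set (X → Fin K))).Nonempty := by
      obtain ⟨f0, hf0⟩ := hPne
      exact ⟨_, f0, hf0, rfl⟩
    have hinf : expLoss strat x ℓ - R
        ≤ sInf ((fun pl : X → Fin K => ∑ t, ℓ t (pl (x t))) '' (Pol : Set (X → Fin K))) := by
      refine le_csInf hSne ?_
      rintro y ⟨pl, hplmem, rfl⟩
      have := hreg x ℓ hℓ pl hplmem
      simp only [] at this ⊢
      linarith
    linarith [hinf]
end
end

section
/- Let K ≥ 2, γ > 0, v ∈ ℝ^K and y* ∈ {1,…,K}. Define v̄ ∈ ℝ^K by v̄_y = v_y − (1/K)·Σ_{y'=1}^K v_{y'}. If the cost-sensitive hinge loss vanishes, i.e. Σ_{y ≠ y*} max(1 + v̄_y/γ, 0) = 0, then the multiclass hinge loss at margin Kγ vanishes, i.e. max(1 − (v_{y*} − max_{y ≠ y*} v_y)/(Kγ), 0) = 0; in particular v_{y*} ≥ Kγ + v_y for all y ≠ y*. -/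
noncomputable section

open Finset

/-- if the cost-sensitive hinge loss (with centered scores) vanishes at margin γ,
then the multiclass hinge loss at margin Kγ vanishes; in particular
`v_{y*} ≥ Kγ + v_y` for every `y ≠ y*`. -/
theorem stmt13 (K : ℕ) (hK : 2 ≤ K) (γ : ℝ) (hγ : 0 < γ)
    (v : Fin K → ℝ) (ystar : Fin K)
    (vbar : Fin K → ℝ) (hvbar : ∀ y, vbar y = v y - (1 / (K : ℝ)) * ∑ y', v y')
    (hcs : ∑ y ∈ Finset.univ.erase ystar, max (1 + vbar y / γ) 0 = 0) :
    max (1 - (v ystar - ⨆ y : {y : Fin K // y ≠ ystar}, v y.1) / (K * γ)) 0 = 0 ∧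
    ∀ y, y ≠ ystar → K * γ + v y ≤ v ystar := by
  have hK0 : (0:ℝ) < K := by positivity
  -- each term is zero
  have hterm : ∀ y ∈ Finset.univ.erase ystar, max (1 + vbar y / γ) 0 = 0 := by
    intro y hy
    have := (Finset.sum_eq_zero_iff_of_nonneg (fun y _ => le_max_right _ 0)).mp hcs
    exact this y hy
  have h2 : ∀ y, y ≠ ystar → vbar y ≤ -γ := by
    intro y hy
    have h := hterm y (by simp [hy])
    have h1 : 1 + vbar y / γ ≤ 0 := by
      by_contra hc
      push_neg at hc
      have := max_eq_left (le_of_lt hc)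
      rw [this] at h; linarith
    have : vbar y / γ ≤ -1 := by linarith
    have := (div_le_iff₀ hγ).mp this
    linarith
  -- sum of vbar is zero
  have hsum : ∑ y, vbar y = 0 := by
    simp only [hvbar]
    rw [Finset.sum_sub_distrib, Finset.sum_const]
    simp [Finset.card_univ]
    field_simp
    ring
  have hsplit : vbar ystar + ∑ y ∈ Finset.univ.erase ystar, vbar y = 0 := by
    rw [Finset.add_sum_erase _ _ (Finset.mem_univ ystar)]
    exact hsum
  have hcard : (Finset.univ.erase ystar).card = K - 1 := by
    rw [Finset.card_erase_of_mem (Finset.mem_univ _), Finset.card_univ, Fintype.card_fin]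
  have hsumle : ∑ y ∈ Finset.univ.erase ystar, vbar y ≤ (K - 1 : ℝ) * (-γ) := by
    calc ∑ y ∈ Finset.univ.erase ystar, vbar y
        ≤ ∑ y ∈ Finset.univ.erase ystar, (-γ) := by
          apply Finset.sum_le_sum
          intro y hy
          exact h2 y (Finset.ne_of_mem_erase hy)
      _ = (K - 1 : ℝ) * (-γ) := by
          rw [Finset.sum_const, hcard, nsmul_eq_mul]
          congr 1
          have : (1:ℕ) ≤ K := by omega
          push_cast [Nat.cast_sub this]
          ring
  have hstar : (K - 1 : ℝ) * γ ≤ vbar ystar := by nlinarith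
  have hkey : ∀ y, y ≠ ystar → K * γ + v y ≤ v ystar := by
    intro y hy
    have h := h2 y hy
    have hv : v y - v ystar = vbar y - vbar ystar := by
      rw [hvbar, hvbar]; ring
    nlinarith
  refine ⟨?_, hkey⟩
  have hne : Nonempty {y : Fin K // y ≠ ystar} := by
    have : ∃ y : Fin K, y ≠ ystar := Fintype.exists_ne_of_one_lt_card (by simp; omega) ystar
    obtain ⟨y, hy⟩ := this
    exact ⟨⟨y, hy⟩⟩
  have hsup : (⨆ y : {y : Fin K // y ≠ ystar}, v y.1) ≤ v ystar - K * γ := by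
    apply ciSup_le
    intro y
    have := hkey y.1 y.2
    linarith
  apply max_eq_right
  rw [sub_nonpos]
  rw [le_div_iff₀ (by positivity)]
  linarith
end
end

section
/- For every γ > 0, γ̃ > 0 and every integer K ≥ 3, there exist a vector v ∈ ℝ^K with Σ_{y=1}^K v_y = 0 and a label y* ∈ {1,…,K} such that the multiclass hinge loss at margin γ vanishes, max(1 − (v_{y*} − max_{y ≠ y*} v_y)/γ, 0) = 0, while the cost-sensitive hinge loss at margin γ̃ satisfies Σ_{y ≠ y*} max(1 + v_y/γ̃, 0) ≥ 1. -/
noncomputable section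

open Finset

/-- for every γ, γ̃ > 0 and K ≥ 3 there is a centered score vector `v`
and a label `y*` for which the multiclass hinge loss at margin γ vanishes while the
cost-sensitive hinge loss at margin γ̃ is at least 1. -/
theorem stmt14 (γ γt : ℝ) (hγ : 0 < γ) (hγt : 0 < γt) (K : ℕ) (hK : 3 ≤ K) :
    ∃ (v : Fin K → ℝ) (ystar : Fin K),
      (∑ y, v y = 0) ∧
      max (1 - (v ystar - ⨆ y : {y : Fin K // y ≠ ystar}, v y.1) / γ) 0 = 0 ∧
      1 ≤ ∑ y ∈ Finset.univ.erase ystar, max (1 + v y / γt) 0 := by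
  set i0 : Fin K := ⟨0, by omega⟩
  set i1 : Fin K := ⟨1, by omega⟩
  set i2 : Fin K := ⟨2, by omega⟩
  set v : Fin K → ℝ := fun y => if y = i0 then γ else if y = i1 then -γ else 0 with hv
  refine ⟨v, i0, ?_, ?_, ?_⟩
  · have h : ∀ y : Fin K, v y = (if y = i0 then γ else 0) + (if y = i1 then -γ else 0) := by
      intro y
      simp only [hv]
      split_ifs with h1 h2
      · exfalso; rw [h1] at h2; exact absurd (congrArg Fin.val h2) (by simp [i0, i1])
      · ring
      · ring
      · ring
    simp only [h, Finset.sum_add_distrib, Finset.sum_ite_eq' Finset.univ,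
      Finset.mem_univ, if_true]
    ring
  · have hsup : (⨆ y : {y : Fin K // y ≠ i0}, v y.1) = 0 := by
      haveI : Nonempty {y : Fin K // y ≠ i0} :=
        ⟨⟨i1, fun h => absurd (congrArg Fin.val h) (by simp [i0, i1])⟩⟩
      apply le_antisymm
      · apply ciSup_le
        intro y
        simp only [hv]
        rw [if_neg y.2]
        split_ifs <;> linarith
      · have h2 : v i2 = 0 := by
          simp only [hv]
          rw [if_neg, if_neg]
          · exact fun h => absurd (congrArg Fin.val h) (by simp [i1, i2])
          · exact fun h => absurd (congrArg Fin.val h) (by simp [i0, i2])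
        have : v (⟨i2, fun h => absurd (congrArg Fin.val h) (by simp [i0, i2])⟩ :
            {y : Fin K // y ≠ i0}).1 ≤ ⨆ y : {y : Fin K // y ≠ i0}, v y.1 :=
          le_ciSup (f := fun y : {y : Fin K // y ≠ i0} => v y.1)
            (Set.Finite.bddAbove (Set.finite_range _)) _
        rw [h2] at this
        exact this
    have h0 : v i0 = γ := by simp [hv]
    rw [hsup, h0]
    simp [div_self hγ.ne']
  · have h2 : v i2 = 0 := by
      simp only [hv]
      rw [if_neg, if_neg]
      · exact fun h => absurd (congrArg Fin.val h) (by simp [i1, i2])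
      · exact fun h => absurd (congrArg Fin.val h) (by simp [i0, i2])
    have hmem : i2 ∈ Finset.univ.erase i0 := by
      rw [Finset.mem_erase]
      exact ⟨fun h => absurd (congrArg Fin.val h) (by simp [i0, i2]), Finset.mem_univ _⟩
    calc (1 : ℝ) = max (1 + v i2 / γt) 0 := by rw [h2]; simp
      _ ≤ _ := Finset.single_le_sum (f := fun y => max (1 + v y / γt) 0)
          (fun y _ => le_max_right _ _) hmem
end
end

section
/- Let Θ ⊂ ℝ^d be a convex compact set containing the origin-centered Euclidean unit ball and contained in the Euclidean ball of radius R. Let X be a set, K ≥ 2, γ > 0, and let f : X × Θ → ℝ^K_{=0} be such that θ ↦ f(x;θ)_a is L-Lipschitz with respect to the ℓ2 norm for every x ∈ X and a ∈ {1,…,K}. Fix η > 0, contexts x_1, …, x_T ∈ X and loss vectors ℓ_1, …, ℓ_T ∈ ℝ_{≥0}^K with ‖ℓ_t‖_∞ ≤ B_ℓ. For each t let p_t be the probability measure on Θ with density (with respect to Lebesgue measure on Θ) proportional to exp(−η·Σ_{s=1}^{t−1} ⟨ℓ_s, ψ^γ(f(x_s;θ))⟩) (so p_1 is uniform on Θ).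 Then for every ε ∈ (0, RL]: Σ_{t=1}^T E_{θ∼p_t} ⟨ℓ_t, ψ^γ(f(x_t;θ))⟩ − inf_{θ∈Θ} Σ_{t=1}^T ⟨ℓ_t, ψ^γ(f(x_t;θ))⟩ ≤ (T·K·B_ℓ·ε)/γ + (d/η)·log(RL/ε) + (η/2)·Σ_{t=1}^T E_{θ∼p_t} ⟨ℓ_t, ψ^γ(f(x_t;θ))⟩². -/
noncomputable section

open Finset MeasureTheory

/-- The hinge loss `ψ^γ(u) = max(1 + u/γ, 0)`. -/
def hinge (γ u : ℝ) : ℝ := max (1 + u / γ) 0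

lemma exp_neg_le_quad {u : ℝ} (hu : 0 ≤ u) : Real.exp (-u) ≤ 1 - u + u ^ 2 / 2 := by
  have key : ∀ v : ℝ, 0 ≤ v → 1 ≤ (1 - v + v ^ 2 / 2) * Real.exp v := by
    intro v hv
    have hmono : MonotoneOn (fun w : ℝ => (1 - w + w ^ 2 / 2) * Real.exp w) (Set.Ici 0) := by
      have hder : ∀ w : ℝ, HasDerivAt (fun w : ℝ => (1 - w + w ^ 2 / 2) * Real.exp w)
          ((w ^ 2 / 2) * Real.exp w) w := by
        intro w
        have h1 : HasDerivAt (fun w : ℝ => 1 - w + w ^ 2 / 2) (-1 + w) w := by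
          have := ((hasDerivAt_id w).const_sub 1).add
            (((hasDerivAt_pow 2 w)).div_const 2)
          refine this.congr_deriv ?_
          norm_num
        have := h1.mul (Real.hasDerivAt_exp w)
        refine this.congr_deriv ?_
        ring
      apply monotoneOn_of_deriv_nonneg (convex_Ici 0)
      · exact (((continuous_const.sub continuous_id).add
          ((continuous_pow 2).div_const 2)).mul Real.continuous_exp).continuousOn
      · intro w _
        exact (hder w).differentiableAt.differentiableWithinAt
      · intro w hw
        rw [(hder w).deriv]
        have hw' : 0 < w := by simpa using hw
        positivity
    have := hmono (Set.self_mem_Ici) (Set.mem_Ici.2 hv) hv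
    simpa using this
  have hexp : 0 < Real.exp u := Real.exp_pos u
  have h1 := key u hu
  rw [Real.exp_neg, inv_le_iff_one_le_mul₀ hexp]
  linarith

lemma hinge_sub_le {γ : ℝ} (hγ : 0 < γ) (u v : ℝ) : hinge γ u - hinge γ v ≤ max (u - v) 0 / γ := by
  have hrhs : 0 ≤ max (u - v) 0 / γ := div_nonneg (le_max_right _ _) hγ.le
  rcases le_total u v with h | h
  · have : hinge γ u ≤ hinge γ v := by
      unfold hinge
      gcongr
    linarith
  · have h1 : 1 + u / γ = (1 + v / γ) + (u - v) / γ := by ring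
    have h2 : hinge γ u ≤ hinge γ v + (u - v) / γ := by
      unfold hinge
      rw [h1]
      have hd : 0 ≤ (u - v) / γ := div_nonneg (by linarith) hγ.le
      rcases le_or_gt (1 + v / γ) 0 with hc | hc
      · rw [max_eq_right hc]
        have : (1 + v/γ) + (u-v)/γ ≤ (u-v)/γ := by linarith
        exact max_le (this.trans (by linarith)) (by linarith)
      · rw [max_eq_left hc.le, max_eq_left (by linarith)]
    have : max (u - v) 0 = u - v := max_eq_left (by linarith)
    rw [this]
    linarith

lemma sum_pospart {K : ℕ} (w : Fin K → ℝ) (h : ∑ a, w a = 0) :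
    ∑ a, max (w a) 0 = (∑ a, |w a|) / 2 := by
  have : ∀ a, max (w a) 0 = (w a + |w a|) / 2 := by
    intro a
    rcases le_total 0 (w a) with h' | h'
    · rw [max_eq_left h', abs_of_nonneg h']; ring
    · rw [max_eq_right h', abs_of_nonpos h']; ring
  simp_rw [this]
  rw [← Finset.sum_div, Finset.sum_add_distrib, h, zero_add]

set_option maxHeartbeats 1000000 in
/-- regret bound for continuous exponential weights (Hedge) over a compact
convex parameter set `Θ ⊆ ℝ^d`, applied to the surrogate hinge losses.  Here `p_t` has
density proportional to `exp(−η·Σ_{s<t} ⟨ℓ_s, ψ^γ(f(x_s;θ))⟩)` on `Θ`, and expectations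
under `p_t` are written as ratios of Lebesgue integrals over `Θ`. -/
theorem stmt15 (d K T : ℕ) (hd : 1 ≤ d) (hK : 2 ≤ K) (hT : 1 ≤ T)
    (γ : ℝ) (hγ : 0 < γ)
    (Θ : Set (EuclideanSpace ℝ (Fin d)))
    (hconv : Convex ℝ Θ) (hcomp : IsCompact Θ)
    (hball : Metric.closedBall 0 1 ⊆ Θ)
    (R : ℝ) (hΘR : Θ ⊆ Metric.closedBall 0 R)
    (X : Type*) (f : X → EuclideanSpace ℝ (Fin d) → Fin K → ℝ)
    (hsum : ∀ x θ, θ ∈ Θ → ∑ a, f x θ a = 0)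
    (L : NNReal) (hLip : ∀ x a, LipschitzOnWith L (fun θ => f x θ a) Θ)
    (η : ℝ) (hη : 0 < η)
    (x : Fin T → X) (ℓ : Fin T → Fin K → ℝ)
    (Bℓ : ℝ) (hℓ : ∀ t a, 0 ≤ ℓ t a ∧ ℓ t a ≤ Bℓ)
    (W : Fin T → EuclideanSpace ℝ (Fin d) → ℝ)
    (hW : ∀ t θ, W t θ =
      ∑ s ∈ Finset.univ.filter (fun s : Fin T => s < t), ∑ a, ℓ s a * hinge γ (f (x s) θ a))
    (E : Fin T → (EuclideanSpace ℝ (Fin d) → ℝ) → ℝ)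
    (hE : ∀ t g, E t g =
      (∫ θ in Θ, g θ * Real.exp (-(η * W t θ))) / (∫ θ in Θ, Real.exp (-(η * W t θ)))) :
    ∀ ε : ℝ, 0 < ε → ε ≤ R * L →
      ∑ t, E t (fun θ => ∑ a, ℓ t a * hinge γ (f (x t) θ a))
          - sInf ((fun θ => ∑ t, ∑ a, ℓ t a * hinge γ (f (x t) θ a)) '' Θ)
        ≤ T * K * Bℓ * ε / γ + ((d : ℝ) / η) * Real.log (R * L / ε)
          + (η / 2) * ∑ t, E t (fun θ => (∑ a, ℓ t a * hinge γ (f (x t) θ a)) ^ 2) := by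
  intro ε hε hεRL
  classical
  -- basic positivity
  have h0Θ : (0 : EuclideanSpace ℝ (Fin d)) ∈ Θ := hball (Metric.mem_closedBall_self zero_le_one)
  have hBℓ : 0 ≤ Bℓ := le_trans (hℓ ⟨0, hT⟩ ⟨0, by omega⟩).1 (hℓ ⟨0, hT⟩ ⟨0, by omega⟩).2
  have hRL : 0 < R * L := lt_of_lt_of_le hε hεRL
  have hL0 : 0 < (L : ℝ) := by
    rcases lt_or_ge 0 (L : ℝ) with h | h
    · exact h
    · have : (L : ℝ) = 0 := le_antisymm h L.coe_nonneg
      rw [this, mul_zero] at hRL; linarith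
  have hR0 : 0 < R := by
    by_contra h
    push_neg at h
    have : R * L ≤ 0 := mul_nonpos_of_nonpos_of_nonneg h L.coe_nonneg
    linarith
  set t₀ : ℝ := ε / (R * L) with ht₀def
  have ht₀pos : 0 < t₀ := div_pos hε hRL
  have ht₀le : t₀ ≤ 1 := (div_le_one hRL).2 hεRL
  -- the per-round loss
  set g : Fin T → EuclideanSpace ℝ (Fin d) → ℝ :=
    fun t θ => ∑ a, ℓ t a * hinge γ (f (x t) θ a) with hgdef
  have hgnonneg : ∀ t θ, 0 ≤ g t θ := by
    intro t θ
    apply Finset.sum_nonneg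
    intro a _
    exact mul_nonneg (hℓ t a).1 (le_max_right _ _)
  have hhinge_cont : Continuous (hinge γ) :=
    (continuous_const.add (continuous_id.div_const γ)).max continuous_const
  have hgcont : ∀ t, ContinuousOn (g t) Θ := by
    intro t
    apply continuousOn_finset_sum
    intro a _
    exact continuousOn_const.mul (hhinge_cont.comp_continuousOn (hLip (x t) a).continuousOn)
  -- cumulative losses indexed by ℕ
  set V : ℕ → EuclideanSpace ℝ (Fin d) → ℝ :=
    fun n θ => ∑ s ∈ Finset.univ.filter (fun s : Fin T => (s : ℕ) < n), g s θ with hVdef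
  have hWV : ∀ t : Fin T, ∀ θ, W t θ = V t.val θ := by
    intro t θ
    rw [hW t θ]
    simp only [hVdef]
    apply Finset.sum_congr
    · apply Finset.filter_congr
      intro s _
      exact Iff.rfl
    · intro s _
      rfl
  have hVcont : ∀ n, ContinuousOn (V n) Θ := by
    intro n
    apply continuousOn_finset_sum
    intro s _
    exact hgcont s
  have hV0 : ∀ θ, V 0 θ = 0 := by
    intro θ
    simp only [hVdef]
    simp
  have hVsucc : ∀ (t : Fin T) θ, V (t.val + 1) θ = V t.val θ + g t θ := by
    intro t θ
    simp only [hVdef]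
    have hins : Finset.univ.filter (fun s : Fin T => (s : ℕ) < t.val + 1)
        = insert t (Finset.univ.filter (fun s : Fin T => (s : ℕ) < t.val)) := by
      ext s
      simp only [Finset.mem_filter, Finset.mem_univ, true_and, Finset.mem_insert]
      rw [Nat.lt_succ_iff_lt_or_eq]
      constructor
      · rintro (h | h)
        · exact Or.inr (by simpa using h)
        · exact Or.inl (Fin.ext h)
      · rintro (h | h)
        · exact Or.inr (by simp [h])
        · exact Or.inl (by simpa using h)
    rw [hins, Finset.sum_insert (by simp)]
    ring
  have hVT : ∀ θ, V T θ = ∑ t, g t θ := by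
    intro θ
    simp only [hVdef]
    congr 1
    apply Finset.filter_true_of_mem
    intro s _
    exact s.isLt
  -- measure-theoretic facts
  have hΘmeas : MeasurableSet Θ := hcomp.isClosed.measurableSet
  have hμfin : volume Θ < ⊤ := hcomp.measure_lt_top
  have hμpos : 0 < volume Θ :=
    lt_of_lt_of_le (Metric.measure_closedBall_pos volume 0 one_pos) (measure_mono hball)
  have hμrpos : 0 < (volume Θ).toReal := ENNReal.toReal_pos hμpos.ne' hμfin.ne
  set Y : ℕ → ℝ := fun n => ∫ θ in Θ, Real.exp (-(η * V n θ)) with hYdef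
  have hexp_cont : ∀ n, ContinuousOn (fun θ => Real.exp (-(η * V n θ))) Θ := by
    intro n
    exact Real.continuous_exp.comp_continuousOn ((continuousOn_const.mul (hVcont n)).neg)
  have hexp_int : ∀ n, IntegrableOn (fun θ => Real.exp (-(η * V n θ))) Θ volume := by
    intro n
    exact (hexp_cont n).integrableOn_compact hcomp
  have hYpos : ∀ n, 0 < Y n := by
    intro n
    obtain ⟨θM, hθM, hmax⟩ := hcomp.exists_isMaxOn ⟨0, h0Θ⟩ (hVcont n)
    have hmono : (volume Θ).toReal * Real.exp (-(η * V n θM)) ≤ Y n := by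
      have h1 := setIntegral_mono_on
        (integrableOn_const hμfin.ne) (hexp_int n) hΘmeas
        (fun θ hθ => Real.exp_le_exp.2
          (neg_le_neg (mul_le_mul_of_nonneg_left (hmax hθ) hη.le)))
      rw [setIntegral_const, smul_eq_mul] at h1
      exact h1
    have : (0:ℝ) < (volume Θ).toReal * Real.exp (-(η * V n θM)) := by positivity
    linarith
  -- per-step inequality
  have hstep : ∀ t : Fin T,
      Real.log (Y (t.val + 1)) - Real.log (Y t.val) ≤
        -(η * E t (g t)) + η ^ 2 / 2 * E t (fun θ => (g t θ) ^ 2) := by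
    intro t
    set I1 : ℝ := ∫ θ in Θ, g t θ * Real.exp (-(η * V t.val θ)) with hI1def
    set I2 : ℝ := ∫ θ in Θ, (g t θ) ^ 2 * Real.exp (-(η * V t.val θ)) with hI2def
    have hI1int : IntegrableOn (fun θ => g t θ * Real.exp (-(η * V t.val θ))) Θ volume :=
      ((hgcont t).mul (hexp_cont t.val)).integrableOn_compact hcomp
    have hI2int : IntegrableOn (fun θ => (g t θ) ^ 2 * Real.exp (-(η * V t.val θ))) Θ volume :=
      (((hgcont t).pow 2).mul (hexp_cont t.val)).integrableOn_compact hcomp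
    have hEg : E t (g t) = I1 / Y t.val := by
      rw [hE t (g t)]
      simp only [hWV, hI1def, hYdef]
    have hEg2 : E t (fun θ => (g t θ) ^ 2) = I2 / Y t.val := by
      rw [hE t _]
      simp only [hWV, hI2def, hYdef]
    have hYle : Y (t.val + 1) ≤ Y t.val - η * I1 + η ^ 2 / 2 * I2 := by
      have hpt : ∀ θ ∈ Θ, Real.exp (-(η * V (t.val + 1) θ)) ≤
          Real.exp (-(η * V t.val θ)) - η * (g t θ * Real.exp (-(η * V t.val θ)))
            + η ^ 2 / 2 * ((g t θ) ^ 2 * Real.exp (-(η * V t.val θ))) := by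
        intro θ hθ
        have hsplit : Real.exp (-(η * V (t.val + 1) θ))
            = Real.exp (-(η * V t.val θ)) * Real.exp (-(η * g t θ)) := by
          rw [← Real.exp_add, hVsucc t θ]
          ring_nf
        have hquad := exp_neg_le_quad (mul_nonneg hη.le (hgnonneg t θ))
        have hexps : 0 < Real.exp (-(η * V t.val θ)) := Real.exp_pos _
        calc Real.exp (-(η * V (t.val + 1) θ))
            = Real.exp (-(η * V t.val θ)) * Real.exp (-(η * g t θ)) := hsplit
          _ ≤ Real.exp (-(η * V t.val θ)) * (1 - η * g t θ + (η * g t θ) ^ 2 / 2) :=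
              mul_le_mul_of_nonneg_left hquad hexps.le
          _ = Real.exp (-(η * V t.val θ)) - η * (g t θ * Real.exp (-(η * V t.val θ)))
              + η ^ 2 / 2 * ((g t θ) ^ 2 * Real.exp (-(η * V t.val θ))) := by ring
      have hrhsint : IntegrableOn (fun θ =>
          Real.exp (-(η * V t.val θ)) - η * (g t θ * Real.exp (-(η * V t.val θ)))
            + η ^ 2 / 2 * ((g t θ) ^ 2 * Real.exp (-(η * V t.val θ)))) Θ volume :=
        ((hexp_int t.val).sub (hI1int.const_mul _)).add (hI2int.const_mul _)
      have hm := setIntegral_mono_on (hexp_int (t.val + 1)) hrhsint hΘmeas hpt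
      have ha : IntegrableOn (fun θ => Real.exp (-(η * V t.val θ))
          - η * (g t θ * Real.exp (-(η * V t.val θ)))) Θ volume :=
        (hexp_int t.val).sub (hI1int.const_mul _)
      have hb : IntegrableOn (fun θ => η ^ 2 / 2
          * ((g t θ) ^ 2 * Real.exp (-(η * V t.val θ)))) Θ volume := hI2int.const_mul _
      have hc' : IntegrableOn (fun θ => η * (g t θ * Real.exp (-(η * V t.val θ)))) Θ volume :=
        hI1int.const_mul _
      have hsplitint : (∫ θ in Θ,
          (Real.exp (-(η * V t.val θ)) - η * (g t θ * Real.exp (-(η * V t.val θ)))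
            + η ^ 2 / 2 * ((g t θ) ^ 2 * Real.exp (-(η * V t.val θ)))))
          = Y t.val - η * I1 + η ^ 2 / 2 * I2 := by
        rw [integral_add ha hb, integral_sub (hexp_int t.val) hc',
          integral_const_mul, integral_const_mul]
      calc Y (t.val + 1) = ∫ θ in Θ, Real.exp (-(η * V (t.val + 1) θ)) := by
            simp only [hYdef]
        _ ≤ _ := hm
        _ = Y t.val - η * I1 + η ^ 2 / 2 * I2 := hsplitint
    have hc : Y (t.val + 1) ≤ Y t.val * (1 - η * E t (g t)
        + η ^ 2 / 2 * E t (fun θ => (g t θ) ^ 2)) := by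
      rw [hEg, hEg2]
      have hY0 : Y t.val ≠ 0 := (hYpos t.val).ne'
      have hexpand : Y t.val * (1 - η * (I1 / Y t.val) + η ^ 2 / 2 * (I2 / Y t.val))
          = Y t.val - η * I1 + η ^ 2 / 2 * I2 := by
        field_simp
      rw [hexpand]
      exact hYle
    have hcpos : 0 < 1 - η * E t (g t) + η ^ 2 / 2 * E t (fun θ => (g t θ) ^ 2) := by
      by_contra h
      push_neg at h
      have h2 := hc.trans (mul_nonpos_of_nonneg_of_nonpos (hYpos t.val).le h)
      linarith [hYpos (t.val + 1)]
    have hlog1 : Real.log (Y (t.val + 1)) ≤ Real.log (Y t.val) + Real.log (1 - η * E t (g t)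
        + η ^ 2 / 2 * E t (fun θ => (g t θ) ^ 2)) := by
      rw [← Real.log_mul (hYpos t.val).ne' hcpos.ne']
      exact Real.log_le_log (hYpos (t.val + 1)) hc
    have hlog2 := Real.log_le_sub_one_of_pos hcpos
    linarith
  -- telescoping
  have htel : Real.log (Y T) - Real.log (Y 0)
      ≤ -(η * ∑ t, E t (g t)) + η ^ 2 / 2 * ∑ t, E t (fun θ => (g t θ) ^ 2) := by
    have h1 : ∑ t : Fin T, (Real.log (Y (t.val + 1)) - Real.log (Y t.val))
        = Real.log (Y T) - Real.log (Y 0) := by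
      rw [Fin.sum_univ_eq_sum_range (fun n => Real.log (Y (n + 1)) - Real.log (Y n)) T,
        Finset.sum_range_sub (fun n => Real.log (Y n)) T]
    rw [← h1]
    calc ∑ t : Fin T, (Real.log (Y (t.val + 1)) - Real.log (Y t.val))
        ≤ ∑ t : Fin T, (-(η * E t (g t)) + η ^ 2 / 2 * E t (fun θ => (g t θ) ^ 2)) :=
          Finset.sum_le_sum (fun t _ => hstep t)
      _ = -(η * ∑ t, E t (g t)) + η ^ 2 / 2 * ∑ t, E t (fun θ => (g t θ) ^ 2) := by
          rw [Finset.sum_add_distrib, Finset.sum_neg_distrib, ← Finset.mul_sum, ← Finset.mul_sum]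
  -- the minimizer
  obtain ⟨θs, hθsΘ, hmin⟩ := hcomp.exists_isMinOn ⟨0, h0Θ⟩ (hVcont T)
  -- Lipschitz-type bound on the losses
  have hgdiff : ∀ (t : Fin T), ∀ θ ∈ Θ, ∀ θ' ∈ Θ,
      g t θ - g t θ' ≤ K * Bℓ * ((L : ℝ) * dist θ θ') / (2 * γ) := by
    intro t θ hθ θ' hθ'
    have hdiff : g t θ - g t θ'
        = ∑ a, ℓ t a * (hinge γ (f (x t) θ a) - hinge γ (f (x t) θ' a)) := by
      simp only [hgdef]
      rw [← Finset.sum_sub_distrib]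
      apply Finset.sum_congr rfl
      intro a _
      ring
    rw [hdiff]
    have hstep1 : ∀ a, ℓ t a * (hinge γ (f (x t) θ a) - hinge γ (f (x t) θ' a))
        ≤ Bℓ * (max (f (x t) θ a - f (x t) θ' a) 0 / γ) := by
      intro a
      have h1 := hinge_sub_le hγ (f (x t) θ a) (f (x t) θ' a)
      have h2 : 0 ≤ max (f (x t) θ a - f (x t) θ' a) 0 / γ :=
        div_nonneg (le_max_right _ _) hγ.le
      calc ℓ t a * (hinge γ (f (x t) θ a) - hinge γ (f (x t) θ' a))
          ≤ ℓ t a * (max (f (x t) θ a - f (x t) θ' a) 0 / γ) :=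
            mul_le_mul_of_nonneg_left h1 (hℓ t a).1
        _ ≤ Bℓ * (max (f (x t) θ a - f (x t) θ' a) 0 / γ) :=
            mul_le_mul_of_nonneg_right (hℓ t a).2 h2
    have hsum0 : ∑ a, (f (x t) θ a - f (x t) θ' a) = 0 := by
      rw [Finset.sum_sub_distrib, hsum (x t) θ hθ, hsum (x t) θ' hθ']
      ring
    have habs : ∀ a, |f (x t) θ a - f (x t) θ' a| ≤ (L : ℝ) * dist θ θ' := by
      intro a
      have := (hLip (x t) a).dist_le_mul θ hθ θ' hθ'
      rwa [Real.dist_eq] at this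
    calc ∑ a, ℓ t a * (hinge γ (f (x t) θ a) - hinge γ (f (x t) θ' a))
        ≤ ∑ a, Bℓ * (max (f (x t) θ a - f (x t) θ' a) 0 / γ) :=
          Finset.sum_le_sum (fun a _ => hstep1 a)
      _ = (Bℓ / γ) * ∑ a, max (f (x t) θ a - f (x t) θ' a) 0 := by
          rw [Finset.mul_sum]
          apply Finset.sum_congr rfl
          intro a _
          ring
      _ = (Bℓ / γ) * ((∑ a, |f (x t) θ a - f (x t) θ' a|) / 2) := by
          rw [sum_pospart _ hsum0]
      _ ≤ (Bℓ / γ) * ((∑ _a : Fin K, (L : ℝ) * dist θ θ') / 2) := by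
          apply mul_le_mul_of_nonneg_left _ (div_nonneg hBℓ hγ.le)
          gcongr
          exact habs _
      _ = K * Bℓ * ((L : ℝ) * dist θ θ') / (2 * γ) := by
          rw [Finset.sum_const, Finset.card_univ, Fintype.card_fin, nsmul_eq_mul]
          field_simp
  -- the shrunk set
  set S : Set (EuclideanSpace ℝ (Fin d)) := (AffineMap.homothety θs t₀) '' Θ with hSdef
  have hhomapp : ∀ z, (AffineMap.homothety θs t₀) z = t₀ • (z - θs) + θs := by
    intro z
    simp [AffineMap.homothety_apply]
  have hSsub : S ⊆ Θ := by
    rintro ψ ⟨z, hz, rfl⟩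
    rw [hhomapp]
    have heq : t₀ • (z - θs) + θs = t₀ • z + (1 - t₀) • θs := by
      rw [smul_sub, sub_smul, one_smul]
      abel
    rw [heq]
    exact hconv hz hθsΘ ht₀pos.le (by linarith) (by ring)
  have hSdist : ∀ ψ ∈ S, dist ψ θs ≤ t₀ * (2 * R) := by
    rintro ψ ⟨z, hz, rfl⟩
    rw [hhomapp, dist_eq_norm]
    have heq : t₀ • (z - θs) + θs - θs = t₀ • (z - θs) := by abel
    rw [heq, norm_smul]
    have hz' : ‖z‖ ≤ R := by
      have := hΘR hz
      rwa [Metric.mem_closedBall, dist_zero_right] at this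
    have hθs' : ‖θs‖ ≤ R := by
      have := hΘR hθsΘ
      rwa [Metric.mem_closedBall, dist_zero_right] at this
    have hnorm : ‖z - θs‖ ≤ 2 * R := by
      calc ‖z - θs‖ ≤ ‖z‖ + ‖θs‖ := norm_sub_le _ _
        _ ≤ 2 * R := by linarith
    calc ‖t₀‖ * ‖z - θs‖ = t₀ * ‖z - θs‖ := by rw [Real.norm_eq_abs, abs_of_pos ht₀pos]
      _ ≤ t₀ * (2 * R) := mul_le_mul_of_nonneg_left hnorm ht₀pos.le
  -- value bound on the shrunk set
  have hVS : ∀ ψ ∈ S, V T ψ ≤ V T θs + T * K * Bℓ * ε / γ := by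
    intro ψ hψ
    have hψΘ := hSsub hψ
    have hper : ∀ t : Fin T, g t ψ - g t θs ≤ K * Bℓ * ε / γ := by
      intro t
      have h1 := hgdiff t ψ hψΘ θs hθsΘ
      have hd := hSdist ψ hψ
      have hKB : 0 ≤ (K : ℝ) * Bℓ := mul_nonneg (Nat.cast_nonneg K) hBℓ
      have heq : (L : ℝ) * (t₀ * (2 * R)) = 2 * ε := by
        rw [ht₀def]
        field_simp
      have hld : (L : ℝ) * dist ψ θs ≤ 2 * ε := by
        calc (L : ℝ) * dist ψ θs ≤ (L : ℝ) * (t₀ * (2 * R)) :=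
              mul_le_mul_of_nonneg_left hd L.coe_nonneg
          _ = 2 * ε := heq
      have h2 : (K : ℝ) * Bℓ * ((L : ℝ) * dist ψ θs) / (2 * γ)
          ≤ (K : ℝ) * Bℓ * (2 * ε) / (2 * γ) := by
        gcongr
      have h3 : (K : ℝ) * Bℓ * (2 * ε) / (2 * γ) = K * Bℓ * ε / γ := by
        field_simp
      linarith
    have hsum' : V T ψ - V T θs ≤ ∑ _t : Fin T, (K * Bℓ * ε / γ : ℝ) := by
      rw [hVT ψ, hVT θs, ← Finset.sum_sub_distrib]
      exact Finset.sum_le_sum (fun t _ => hper t)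
    have hcard : ∑ _t : Fin T, (K * Bℓ * ε / γ : ℝ) = T * K * Bℓ * ε / γ := by
      rw [Finset.sum_const, Finset.card_univ, Fintype.card_fin, nsmul_eq_mul]
      ring
    rw [hcard] at hsum'
    linarith
  -- volume of the shrunk set
  have hScont : Continuous (⇑(AffineMap.homothety θs t₀)) :=
    (AffineMap.homothety θs t₀).continuous_of_finiteDimensional
  have hScomp : IsCompact S := hcomp.image hScont
  have hSmeas : MeasurableSet S := hScomp.isClosed.measurableSet
  have hSfin : volume S < ⊤ := lt_of_le_of_lt (measure_mono hSsub) hμfin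
  have hvolS : (volume S).toReal = t₀ ^ d * (volume Θ).toReal := by
    rw [hSdef, Measure.addHaar_image_homothety]
    rw [ENNReal.toReal_mul, ENNReal.toReal_ofReal (abs_nonneg _)]
    congr 1
    rw [finrank_euclideanSpace_fin, abs_of_pos (pow_pos ht₀pos d)]
  -- lower bound on the final partition function
  set Q : ℝ := V T θs + T * K * Bℓ * ε / γ with hQdef
  have hYT_lb : t₀ ^ d * (volume Θ).toReal * Real.exp (-(η * Q)) ≤ Y T := by
    have hlow2 : (volume S).toReal * Real.exp (-(η * Q)) ≤
        ∫ θ in S, Real.exp (-(η * V T θ)) := by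
      have h1 := setIntegral_mono_on
        (integrableOn_const hSfin.ne)
        ((hexp_int T).mono_set hSsub) hSmeas
        (fun θ hθ => Real.exp_le_exp.2
          (neg_le_neg (mul_le_mul_of_nonneg_left (hVS θ hθ) hη.le)))
      rwa [setIntegral_const, smul_eq_mul] at h1
    have hlow1 : (∫ θ in S, Real.exp (-(η * V T θ))) ≤ Y T := by
      have := setIntegral_mono_set (hexp_int T)
        (Filter.Eventually.of_forall (fun θ => (Real.exp_pos _).le))
        (HasSubset.Subset.eventuallyLE hSsub)
      exact this
    rw [← hvolS]
    linarith
  have hY0eq : Y 0 = (volume Θ).toReal := by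
    simp only [hYdef, hV0, mul_zero, neg_zero, Real.exp_zero]
    rw [setIntegral_const, smul_eq_mul, mul_one]
    rfl
  -- logarithmic bounds
  set Lg : ℝ := Real.log (R * L / ε) with hLgdef
  have hlogt₀ : Real.log t₀ = -Lg := by
    rw [ht₀def, hLgdef, Real.log_div hε.ne' hRL.ne', Real.log_div hRL.ne' hε.ne']
    ring
  have hYT_log : -((d : ℝ) * Lg) + Real.log ((volume Θ).toReal) - η * Q ≤ Real.log (Y T) := by
    have hpos : 0 < t₀ ^ d * (volume Θ).toReal * Real.exp (-(η * Q)) := by positivity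
    have := Real.log_le_log hpos hYT_lb
    rw [Real.log_mul (by positivity) (Real.exp_pos _).ne',
      Real.log_mul (by positivity) hμrpos.ne', Real.log_exp, Real.log_pow, hlogt₀] at this
    linarith
  -- combine everything
  have hkey : η * (∑ t, E t (g t)) - η * V T θs
      ≤ η * (T * K * Bℓ * ε / γ) + (d : ℝ) * Lg
        + η ^ 2 / 2 * ∑ t, E t (fun θ => (g t θ) ^ 2) := by
    have h1 : Real.log (Y 0) = Real.log ((volume Θ).toReal) := by rw [hY0eq]
    have h2 := htel
    rw [h1] at h2
    rw [hQdef] at hYT_log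
    have h3 : η * (V T θs + T * K * Bℓ * ε / γ)
        = η * V T θs + η * (T * K * Bℓ * ε / γ) := by ring
    rw [h3] at hYT_log
    linarith
  -- identify the infimum
  have hsInf : sInf ((fun θ => ∑ t, ∑ a, ℓ t a * hinge γ (f (x t) θ a)) '' Θ) = V T θs := by
    have hfeq : (fun θ => ∑ t, ∑ a, ℓ t a * hinge γ (f (x t) θ a)) = V T := by
      funext θ
      rw [hVT θ]
    rw [hfeq]
    apply IsLeast.csInf_eq
    constructor
    · exact ⟨θs, hθsΘ, rfl⟩
    · rintro y ⟨z, hz, rfl⟩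
      exact hmin hz
  rw [hsInf]
  have hA : (∑ t, E t fun θ => ∑ a, ℓ t a * hinge γ (f (x t) θ a)) = ∑ t, E t (g t) := by
    simp only [hgdef]
  have hB : (∑ t, E t fun θ => (∑ a, ℓ t a * hinge γ (f (x t) θ a)) ^ 2)
      = ∑ t, E t (fun θ => (g t θ) ^ 2) := by
    simp only [hgdef]
  rw [hA, hB]
  apply le_of_mul_le_mul_left _ hη
  have hexpand : η * (T * K * Bℓ * ε / γ + (d : ℝ) / η * Lg
      + η / 2 * ∑ t, E t (fun θ => (g t θ) ^ 2))
      = η * (T * K * Bℓ * ε / γ) + (d : ℝ) * Lg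
        + η ^ 2 / 2 * ∑ t, E t (fun θ => (g t θ) ^ 2) := by
    have h1 : η * ((d : ℝ) / η * Lg) = (d : ℝ) * Lg := by
      field_simp
    rw [mul_add, mul_add, h1]
    ring
  rw [mul_sub, hexpand]
  exact hkey
end
end
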